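/- arXiv:1802.10531 — 12 statements merged into one kernel-verified Lean document; each statement's English description precedes it below -/
import Mathlib

section
/- Let F be a field and n ≥ 1. For every matrix A ∈ GL(n,F) there exist a permutation π of {1,…,n}, an invertible diagonal matrix D over F, and an upper triangular matrix U over F with all diagonal entries equal to 1, such that the product D·A·U is π-shaped, i.e. its (π(j),j)-entry equals 1 for every j, and its (i,j)-entry equals 0 whenever i > π(j) or j > π⁻¹(i). -/
open Matrix

private lemma tri_mul_tri {F : Type*} [Field F] {n : ℕ} {U V : Matrix (Fin n) (Fin n) F}
    (hU : ∀ i j, j < i → U i j = 0) (hV : ∀ i j, j < i → V i j = 0) :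
    (∀ i j, j < i → (U * V) i j = 0) ∧ (∀ i, (U * V) i i = U i i * V i i) := by
  constructor
  · intro i j hij
    rw [Matrix.mul_apply]
    apply Finset.sum_eq_zero
    intro k _
    rcases lt_or_ge k i with h | h
    · rw [hU i k h, zero_mul]
    · rw [hV k j (lt_of_lt_of_le hij h), mul_zero]
  · intro i
    rw [Matrix.mul_apply]
    rw [Finset.sum_eq_single i]
    · intro k _ hk
      rcases lt_or_ge k i with h | h
      · rw [hU i k h, zero_mul]
      · rw [hV k i (lt_of_le_of_ne h (Ne.symm hk)), mul_zero]
    · intro h; exact absurd (Finset.mem_univ i) h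

private lemma key_lemma (F : Type*) [Field F] :
    ∀ (n : ℕ) (A : Matrix (Fin n) (Fin n) F), IsUnit A →
    ∃ (π : Equiv.Perm (Fin n)) (d : Fin n → F) (U : Matrix (Fin n) (Fin n) F),
      (∀ i, IsUnit (d i)) ∧
      (∀ i j : Fin n, j < i → U i j = 0) ∧ (∀ i, U i i = 1) ∧
      (∀ j, (Matrix.diagonal d * A * U) (π j) j = 1) ∧
      (∀ i j : Fin n, (π j < i ∨ π.symm i < j) → (Matrix.diagonal d * A * U) i j = 0) := by
  intro n
  induction n with
  | zero =>
    intro A _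
    exact ⟨1, fun i => 1, 1, fun i => i.elim0, fun i => i.elim0, fun i => i.elim0,
      fun i => i.elim0, fun i => i.elim0⟩
  | succ n ih =>
    intro A hA
    classical
    have hdet : IsUnit A.det := (Matrix.isUnit_iff_isUnit_det A).mp hA
    have hcol : ∃ i, A i 0 ≠ 0 := by
      by_contra h
      push_neg at h
      rw [Matrix.det_eq_zero_of_column_eq_zero 0 h] at hdet
      simp at hdet
    set s : Finset (Fin (n + 1)) := Finset.univ.filter (fun i => A i 0 ≠ 0) with hs_def
    have hs : s.Nonempty := by
      obtain ⟨i, hi⟩ := hcol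
      exact ⟨i, by simp [hs_def, hi]⟩
    set r := s.max' hs with hrdef
    have hr0 : A r 0 ≠ 0 := by
      have := s.max'_mem hs
      simpa [hs_def] using this
    have hrmax : ∀ i : Fin (n + 1), r < i → A i 0 = 0 := by
      intro i hi
      by_contra h
      exact absurd (s.le_max' i (by simp [hs_def, h])) (not_le.mpr hi)
    -- Step 1 : scale the pivot row
    set d₀ : Fin (n + 1) → F := fun i => if i = r then (A r 0)⁻¹ else 1 with hd₀
    set A₂ : Matrix (Fin (n + 1)) (Fin (n + 1)) F := Matrix.diagonal d₀ * A with hA₂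
    have hA₂e : ∀ i j, A₂ i j = d₀ i * A i j := by
      intro i j; rw [hA₂, Matrix.diagonal_mul]
    have hA₂r0 : A₂ r 0 = 1 := by
      rw [hA₂e, hd₀]; simp [inv_mul_cancel₀ hr0]
    -- Step 2 : clear the pivot row to the right, using unit upper triangular U₀
    set E : Matrix (Fin (n + 1)) (Fin (n + 1)) F :=
      Matrix.of (fun i j => if i = 0 ∧ j ≠ 0 then -(A₂ r j) else 0) with hE
    have hEe : ∀ i j, E i j = if i = 0 ∧ j ≠ 0 then -(A₂ r j) else 0 := fun i j => rfl
    set U₀ : Matrix (Fin (n + 1)) (Fin (n + 1)) F := 1 + E with hU₀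
    set A₁ : Matrix (Fin (n + 1)) (Fin (n + 1)) F := A₂ * U₀ with hA₁def
    have hA₁e : ∀ i j, A₁ i j = A₂ i j + A₂ i 0 * E 0 j := by
      intro i j
      rw [hA₁def, hU₀, Matrix.mul_add, Matrix.mul_one, Matrix.add_apply, Matrix.mul_apply]
      congr 1
      rw [Finset.sum_eq_single 0]
      · intro k _ hk
        rw [hEe, if_neg (fun h => hk h.1), mul_zero]
      · intro h; exact absurd (Finset.mem_univ 0) h
    have hE0 : ∀ j, E 0 j = if j = 0 then 0 else -(A₂ r j) := by
      intro j; rw [hEe]; by_cases h : j = 0 <;> simp [h]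
    have hA₁0 : ∀ i, A₁ i 0 = A₂ i 0 := by
      intro i; rw [hA₁e, hE0]; simp
    have hA₁r : ∀ j, j ≠ 0 → A₁ r j = 0 := by
      intro j hj
      rw [hA₁e, hA₂r0, hE0, if_neg hj, one_mul]
      ring
    have hA₁r0 : A₁ r 0 = 1 := by rw [hA₁0, hA₂r0]
    have hU₀tri : ∀ i j : Fin (n + 1), j < i → U₀ i j = 0 := by
      intro i j hij
      have hi0 : i ≠ 0 := by rintro rfl; exact absurd hij (Fin.not_lt_zero j)
      rw [hU₀, Matrix.add_apply, Matrix.one_apply_ne (ne_of_gt hij), hEe,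
        if_neg (fun h => hi0 h.1), add_zero]
    have hU₀diag : ∀ i, U₀ i i = 1 := by
      intro i
      rw [hU₀, Matrix.add_apply, Matrix.one_apply_eq, hEe,
        if_neg (fun h => h.2 h.1), add_zero]
    -- invertibility of A₁
    have hU₀u : IsUnit U₀ := by
      rw [Matrix.isUnit_iff_isUnit_det]
      have : U₀.det = ∏ i, U₀ i i :=
        Matrix.det_of_upperTriangular (fun i j h => hU₀tri i j h)
      rw [this]
      simp [hU₀diag]
    have hd₀u : ∀ i, IsUnit (d₀ i) := by
      intro i; rw [hd₀]; dsimp only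
      split
      · exact isUnit_iff_ne_zero.mpr (inv_ne_zero hr0)
      · exact isUnit_one
    have hA₁u : IsUnit A₁ := by
      rw [hA₁def, hA₂]
      have hDu : IsUnit (Matrix.diagonal d₀) := by
        rw [Matrix.isUnit_iff_isUnit_det, Matrix.det_diagonal]
        exact isUnit_iff_ne_zero.mpr
          (Finset.prod_ne_zero_iff.mpr fun i _ => (hd₀u i).ne_zero)
      exact (hDu.mul hA).mul hU₀u
    -- the complementary minor
    set B : Matrix (Fin n) (Fin n) F := A₁.submatrix r.succAbove Fin.succ with hB
    have hBu : IsUnit B := by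
      have hdetA₁ : IsUnit A₁.det := (Matrix.isUnit_iff_isUnit_det A₁).mp hA₁u
      rw [Matrix.det_succ_row A₁ r, Finset.sum_eq_single 0] at hdetA₁
      · have hsub : A₁.submatrix r.succAbove (Fin.succAbove 0) = B := by
          ext i j
          rw [hB, Matrix.submatrix_apply, Matrix.submatrix_apply, Fin.zero_succAbove]
        rw [hA₁r0, hsub] at hdetA₁
        exact (Matrix.isUnit_iff_isUnit_det B).mpr
          (IsUnit.mul_iff.mp hdetA₁).2
      · intro j _ hj
        rw [hA₁r j hj]; ring
      · intro h; exact absurd (Finset.mem_univ 0) h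
    obtain ⟨π', d', U', hd'u, hU'tri, hU'diag, hpiv', hshape'⟩ := ih B hBu
    -- assemble the permutation
    set π : Equiv.Perm (Fin (n + 1)) :=
      ((finSuccEquiv n).trans π'.optionCongr).trans (finSuccEquiv' r).symm with hπ
    have hπ0 : π 0 = r := by
      rw [hπ]; simp [finSuccEquiv_zero, finSuccEquiv'_symm_none]
    have hπs : ∀ j : Fin n, π j.succ = r.succAbove (π' j) := by
      intro j; rw [hπ]; simp [finSuccEquiv_succ, finSuccEquiv'_symm_some]
    have hπsymm_r : π.symm r = 0 := by
      rw [← hπ0, Equiv.symm_apply_apply]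
    have hπsymm_s : ∀ i : Fin n, π.symm (r.succAbove i) = (π'.symm i).succ := by
      intro i
      have h1 : π ((π'.symm i).succ) = r.succAbove i := by
        rw [hπs, Equiv.apply_symm_apply]
      rw [← h1, Equiv.symm_apply_apply]
    -- assemble the diagonal
    set d : Fin (n + 1) → F := fun i => (finSuccEquiv' r i).elim 1 d' with hd
    have hdr : d r = 1 := by
      rw [hd]
      show ((finSuccEquiv' r) r).elim 1 d' = 1
      rw [finSuccEquiv'_at]
      rfl
    have hds : ∀ i, d (r.succAbove i) = d' i := by
      intro i; rw [hd]; simp [finSuccEquiv'_succAbove]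
    have hdu : ∀ i, IsUnit (d i) := by
      intro i
      rcases eq_or_ne i r with rfl | hi
      · rw [hdr]; exact isUnit_one
      · obtain ⟨i', rfl⟩ := Fin.exists_succAbove_eq hi
        rw [hds]; exact hd'u i'
    -- assemble the upper triangular factor
    set V : Matrix (Fin (n + 1)) (Fin (n + 1)) F := Matrix.of (fun i j =>
      if hi : i = 0 then (if j = 0 then (1 : F) else 0)
      else if hj : j = 0 then 0 else U' (i.pred hi) (j.pred hj)) with hV
    have hVc0 : ∀ k, V k 0 = if k = 0 then 1 else 0 := by
      intro k; by_cases h : k = 0 <;> simp [hV, h]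
    have hV0s : ∀ j : Fin n, V 0 j.succ = 0 := by
      intro j; simp [hV, Fin.succ_ne_zero j]
    have hVss : ∀ i j : Fin n, V i.succ j.succ = U' i j := by
      intro i j; simp [hV, Fin.succ_ne_zero, Fin.pred_succ]
    have hVtri : ∀ i j : Fin (n + 1), j < i → V i j = 0 := by
      intro i j hij
      have hi0 : i ≠ 0 := by rintro rfl; exact absurd hij (Fin.not_lt_zero j)
      rcases eq_or_ne j 0 with rfl | hj0
      · simp [hV, hi0]
      · have h := hU'tri (i.pred hi0) (j.pred hj0) (Fin.pred_lt_pred_iff.mpr hij)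
        simp [hV, hi0, hj0, h]
    have hVdiag : ∀ i, V i i = 1 := by
      intro i
      rcases eq_or_ne i 0 with rfl | hi
      · simp [hV]
      · simp [hV, hi, hU'diag]
    -- entries of A₁ * V
    have hT0 : ∀ i, (A₁ * V) i 0 = A₁ i 0 := by
      intro i
      rw [Matrix.mul_apply, Finset.sum_eq_single 0]
      · rw [hVc0]; simp
      · intro k _ hk; rw [hVc0, if_neg hk, mul_zero]
      · intro h; exact absurd (Finset.mem_univ 0) h
    have hTs : ∀ i (j : Fin n),
        (A₁ * V) i j.succ = ∑ k : Fin n, A₁ i k.succ * U' k j := by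
      intro i j
      rw [Matrix.mul_apply, Fin.sum_univ_succ, hV0s, mul_zero, zero_add]
      exact Finset.sum_congr rfl fun k _ => by rw [hVss]
    have hTr : ∀ j : Fin n, (A₁ * V) r j.succ = 0 := by
      intro j; rw [hTs]
      exact Finset.sum_eq_zero fun k _ => by rw [hA₁r _ (Fin.succ_ne_zero k), zero_mul]
    have hTsub : ∀ i' j' : Fin n,
        (A₁ * V) (r.succAbove i') j'.succ = (B * U') i' j' := by
      intro i' j'
      rw [hTs, Matrix.mul_apply]
      exact Finset.sum_congr rfl fun k _ => by rw [hB, Matrix.submatrix_apply]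
    -- factor the product
    have hfact : Matrix.diagonal (fun i => d i * d₀ i) * A * (U₀ * V)
        = Matrix.diagonal d * (A₁ * V) := by
      rw [← Matrix.diagonal_mul_diagonal d d₀, hA₁def, hA₂]
      simp only [Matrix.mul_assoc]
    have hSe : ∀ i j, (Matrix.diagonal (fun i => d i * d₀ i) * A * (U₀ * V)) i j
        = d i * (A₁ * V) i j := by
      intro i j; rw [hfact, Matrix.diagonal_mul]
    refine ⟨π, fun i => d i * d₀ i, U₀ * V, fun i => (hdu i).mul (hd₀u i),
      (tri_mul_tri hU₀tri hVtri).1, ?_, ?_, ?_⟩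
    · intro i
      rw [(tri_mul_tri hU₀tri hVtri).2, hU₀diag, hVdiag, one_mul]
    · intro j
      refine Fin.cases ?_ ?_ j
      · rw [hSe, hπ0, hT0, hA₁r0, hdr, mul_one]
      · intro j'
        rw [hSe, hπs, hTsub, hds]
        have h := hpiv' j'
        rwa [Matrix.mul_assoc, Matrix.diagonal_mul] at h
    · intro i j hij
      rw [hSe]
      rcases eq_or_ne i r with rfl | hi
      · rcases Fin.eq_zero_or_eq_succ j with rfl | ⟨j', rfl⟩
        · exfalso
          rcases hij with h | h
          · rw [hπ0] at h; exact lt_irrefl r h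
          · rw [hπsymm_r] at h; exact absurd h (Fin.not_lt_zero _)
        · rw [hTr, mul_zero]
      · obtain ⟨i', rfl⟩ := Fin.exists_succAbove_eq hi
        rcases Fin.eq_zero_or_eq_succ j with rfl | ⟨j', rfl⟩
        · have hri : r < r.succAbove i' := by
            rcases hij with h | h
            · rwa [hπ0] at h
            · exact absurd h (Fin.not_lt_zero _)
          rw [hT0, hA₁0, hA₂e, hrmax _ hri, mul_zero, mul_zero]
        · rw [hTsub, hds]
          have hcond : π' j' < i' ∨ π'.symm i' < j' := by
            rcases hij with h | h
            · left; rw [hπs] at h; exact Fin.succAbove_lt_succAbove_iff.mp h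
            · right; rw [hπsymm_s] at h; exact Fin.succ_lt_succ_iff.mp h
          have h := hshape' i' j' hcond
          rwa [Matrix.mul_assoc, Matrix.diagonal_mul] at h

/-- For every `A ∈ GL(n,F)` there exist a permutation `π`,
an invertible diagonal matrix `D = diagonal d`, and an upper triangular matrix
`U` with unit diagonal such that `D·A·U` is `π`-shaped: its `(π j, j)`-entry
is `1` for every `j`, and its `(i,j)`-entry vanishes whenever `i > π j` or
`j > π⁻¹ i`. -/
theorem stmt_0 (F : Type*) [Field F] (n : ℕ) (hn : 1 ≤ n)
    (A : Matrix (Fin n) (Fin n) F) (hA : IsUnit A) :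
    ∃ (π : Equiv.Perm (Fin n)) (d : Fin n → F) (U : Matrix (Fin n) (Fin n) F),
      (∀ i, IsUnit (d i)) ∧
      (∀ i j : Fin n, j < i → U i j = 0) ∧ (∀ i, U i i = 1) ∧
      (∀ j, (Matrix.diagonal d * A * U) (π j) j = 1) ∧
      (∀ i j : Fin n, (π j < i ∨ π.symm i < j) → (Matrix.diagonal d * A * U) i j = 0) := by
  exact key_lemma F n A hA
end

section
/- Let F be a field and n ≥ 1. Let π and π' be permutations of {1,…,n}, let S be a π-shaped matrix over F and S' a π'-shaped matrix over F, let D be an invertible diagonal matrix over F, and let U be an upper triangular matrix over F with all diagonal entries equal to 1. If S' = D·S·U, then π = π'. Consequently, the subsets B_π := { D·S·U : D invertible diagonal, S π-shaped, U upper triangular with unit diagonal } of GL(n,F) are pairwise disjoint as π ranges over the permutations of {1,…,n}. -/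
/-- A matrix `S` is `π`-shaped: `S (π j) j = 1` for all `j`, and `S i j = 0`
whenever `i > π j` or `j > π⁻¹ i`. -/
def IsPiShaped {F : Type*} [Field F] {n : ℕ} (π : Equiv.Perm (Fin n))
    (S : Matrix (Fin n) (Fin n) F) : Prop :=
  (∀ j, S (π j) j = 1) ∧ ∀ i j : Fin n, (π j < i ∨ π.symm i < j) → S i j = 0

/-- The path subset `B_π = { D·S·U }` with `D` invertible diagonal, `S`
`π`-shaped, and `U` upper triangular with unit diagonal. -/
def PathSubset (F : Type*) [Field F] (n : ℕ) (π : Equiv.Perm (Fin n)) :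
    Set (Matrix (Fin n) (Fin n) F) :=
  {M | ∃ (d : Fin n → F) (S U : Matrix (Fin n) (Fin n) F),
    (∀ i, IsUnit (d i)) ∧ IsPiShaped π S ∧
    (∀ i j : Fin n, j < i → U i j = 0) ∧ (∀ i, U i i = 1) ∧
    M = Matrix.diagonal d * S * U}

namespace BruhatAux

open Matrix Finset

variable {F : Type*} [Field F] {n : ℕ}

/-- Row-truncation matrix: keeps rows `≥ i`. -/
def Pmat (i : Fin n) : Matrix (Fin n) (Fin n) F :=
  Matrix.diagonal (fun r => if i ≤ r then (1 : F) else 0)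

/-- Column-truncation matrix: keeps columns `≤ j`. -/
def Qmat (j : Fin n) : Matrix (Fin n) (Fin n) F :=
  Matrix.diagonal (fun c => if c ≤ j then (1 : F) else 0)

lemma rank_shaped (π : Equiv.Perm (Fin n)) (S : Matrix (Fin n) (Fin n) F)
    (hS : IsPiShaped π S) (i j : Fin n) :
    (Pmat i * S * Qmat j).rank = ((Iic j).filter fun k => i ≤ π k).card := by
  classical
  set K := ((Iic j).filter fun k => i ≤ π k) with hK
  set A := (Pmat (F := F) i * S * Qmat j) with hA
  have hAentry : ∀ r k, A r k =
      (if i ≤ r then (1:F) else 0) * S r k * (if k ≤ j then (1:F) else 0) := by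
    intro r k
    simp [hA, Pmat, Qmat, Matrix.mul_assoc, Matrix.diagonal_mul, Matrix.mul_diagonal,
      mul_assoc]
  have hA0 : ∀ r k, k ∉ K → A r k = 0 := by
    intro r k hk
    rw [hK, mem_filter, mem_Iic] at hk
    push_neg at hk
    rw [hAentry]
    by_cases hkj : k ≤ j
    · have hpk : π k < i := hk hkj
      by_cases hir : i ≤ r
      · have : S r k = 0 := hS.2 r k (Or.inl (lt_of_lt_of_le hpk hir))
        simp [this]
      · simp [hir]
    · simp [hkj]
  -- upper bound
  have hub : A.rank ≤ K.card := by
    have hfac : A = (A.submatrix id (fun k : ↥K => (k : Fin n))) *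
        (Matrix.of fun (k : ↥K) c => if (k : Fin n) = c then (1:F) else 0) := by
      ext r c
      rw [Matrix.mul_apply]
      by_cases hc : c ∈ K
      · rw [Fintype.sum_eq_single (⟨c, hc⟩ : ↥K)]
        · simp
        · intro k hk
          have : (k : Fin n) ≠ c := by
            intro h; apply hk; exact Subtype.ext h
          simp [this]
      · rw [hA0 r c hc]
        symm
        apply Finset.sum_eq_zero
        intro k _
        have : (k : Fin n) ≠ c := by
          intro h; apply hc; rw [← h]; exact k.2
        simp [this]
    calc A.rank ≤ (A.submatrix id (fun k : ↥K => (k : Fin n))).rank := by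
          conv_lhs => rw [hfac]
          exact Matrix.rank_mul_le_left _ _
      _ ≤ Fintype.card ↥K := Matrix.rank_le_card_width _
      _ = K.card := Fintype.card_coe K
  -- lower bound
  set R' := K.image (fun k => π k) with hR'
  have hcardR : R'.card = K.card := Finset.card_image_of_injective _ π.injective
  set B : Matrix ↥R' ↥R' F :=
    Matrix.of (fun r₁ r₂ : ↥R' => A (r₁ : Fin n) (π.symm (r₂ : Fin n))) with hB
  have hmem : ∀ r : ↥R', π.symm (r : Fin n) ∈ K ∧ i ≤ (r : Fin n) := by
    intro r
    obtain ⟨k, hk, hπk⟩ := Finset.mem_image.mp r.2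
    constructor
    · rw [← hπk, Equiv.symm_apply_apply]; exact hk
    · rw [hK, mem_filter] at hk
      rw [← hπk]; exact hk.2
  have hBtri : B.BlockTriangular id := by
    intro r₁ r₂ h
    have hlt : (r₂ : Fin n) < (r₁ : Fin n) := h
    have : S (r₁ : Fin n) (π.symm (r₂ : Fin n)) = 0 := by
      apply hS.2
      left
      rwa [Equiv.apply_symm_apply]
    simp [hB, hAentry, this]
  have hBdiag : ∀ r : ↥R', B r r = 1 := by
    intro r
    obtain ⟨hmem1, hmem2⟩ := hmem r
    have hkj : π.symm (r : Fin n) ≤ j := by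
      rw [hK, mem_filter, mem_Iic] at hmem1; exact hmem1.1
    have hs1 : S (r : Fin n) (π.symm (r : Fin n)) = 1 := by
      have := hS.1 (π.symm (r : Fin n))
      rwa [Equiv.apply_symm_apply] at this
    simp [hB, hAentry, hs1, hmem2, hkj]
  have hBdet : B.det = 1 := by
    rw [Matrix.det_of_upperTriangular hBtri]
    exact Finset.prod_eq_one (fun r _ => hBdiag r)
  have hBrank : B.rank = K.card := by
    rw [Matrix.rank_of_isUnit B ((Matrix.isUnit_iff_isUnit_det B).mpr (by rw [hBdet]; exact isUnit_one))]
    rw [Fintype.card_coe]; exact hcardR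
  have hlb : K.card ≤ A.rank := by
    have hfac2 : B = (Matrix.of fun (r : ↥R') c => if (r : Fin n) = c then (1:F) else 0) * A *
        (Matrix.of fun c (r : ↥R') => if c = π.symm (r : Fin n) then (1:F) else 0) := by
      ext r₁ r₂
      rw [Matrix.mul_apply]
      have h1 : ∀ c, ((Matrix.of fun (r : ↥R') c => if (r : Fin n) = c then (1:F) else 0) * A) r₁ c
          = A (r₁ : Fin n) c := by
        intro c
        rw [Matrix.mul_apply]
        rw [Fintype.sum_eq_single ((r₁ : Fin n))]
        · simp
        · intro k hk; simp [Ne.symm hk]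
      simp only [h1]
      rw [Fintype.sum_eq_single (π.symm (r₂ : Fin n))]
      · simp [hB]
      · intro k hk; simp [hk]
    calc K.card = B.rank := hBrank.symm
      _ ≤ _ := by
          rw [hfac2]
          exact le_trans (Matrix.rank_mul_le_left _ _) (Matrix.rank_mul_le_right _ _)
  exact le_antisymm hub hlb

lemma rank_invariant (S : Matrix (Fin n) (Fin n) F) (d : Fin n → F)
    (U : Matrix (Fin n) (Fin n) F) (hd : ∀ i, IsUnit (d i))
    (hU : ∀ i j : Fin n, j < i → U i j = 0) (hU1 : ∀ i, U i i = 1) (i j : Fin n) :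
    (Pmat i * (Matrix.diagonal d * S * U) * Qmat j).rank = (Pmat i * S * Qmat j).rank := by
  classical
  set q : Fin n → F := fun c => if c ≤ j then (1 : F) else 0 with hq
  set V : Matrix (Fin n) (Fin n) F :=
      Qmat j * U * Qmat j + Matrix.diagonal (fun r => 1 - q r) with hV
  have hQQ : (Qmat j : Matrix (Fin n) (Fin n) F) * Qmat j = Qmat j := by
    ext r c
    simp only [Qmat, Matrix.diagonal_mul_diagonal, Matrix.diagonal_apply]
    by_cases h2 : r = c
    · subst h2; by_cases h : r ≤ j <;> simp [h]
    · simp [h2]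
  have hQUQ : (Qmat j : Matrix (Fin n) (Fin n) F) * U * Qmat j = U * Qmat j := by
    ext r c
    simp only [Qmat, Matrix.diagonal_mul, Matrix.mul_diagonal]
    by_cases hr : r ≤ j
    · simp [hr]
    · by_cases hc : c ≤ j
      · have : c < r := lt_of_le_of_lt hc (not_le.mp hr)
        simp [hU r c this]
      · simp [hc]
  have hfac : Pmat i * (Matrix.diagonal d * S * U) * Qmat j
      = Matrix.diagonal d * ((Pmat i * S * Qmat j) * V) := by
    have hPD : (Pmat i : Matrix (Fin n) (Fin n) F) * Matrix.diagonal d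
        = Matrix.diagonal d * Pmat i := by
      ext r c
      simp only [Pmat, Matrix.diagonal_mul_diagonal, Matrix.diagonal_apply]
      by_cases h2 : r = c
      · subst h2; ring_nf
      · simp [h2]
    have h1 : (Pmat i * S * Qmat j) * V = Pmat i * S * (U * Qmat j) := by
      rw [hV, Matrix.mul_add]
      have h2 : (Pmat i * S * Qmat j) * (Qmat j * U * Qmat j)
          = Pmat i * S * (U * Qmat j) := by
        rw [show (Qmat j : Matrix (Fin n) (Fin n) F) * U * Qmat j = Qmat j * (U * Qmat j) by
          rw [Matrix.mul_assoc]]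
        rw [Matrix.mul_assoc (Pmat i * S) (Qmat j), ← Matrix.mul_assoc (Qmat j) (Qmat j),
          hQQ, ← Matrix.mul_assoc, Matrix.mul_assoc (Pmat i * S), ← Matrix.mul_assoc (Qmat j),
          hQUQ]
      have h3 : (Pmat i * S * Qmat j) * Matrix.diagonal (fun r => 1 - q r) = 0 := by
        rw [Matrix.mul_assoc]
        have : (Qmat j : Matrix (Fin n) (Fin n) F) * Matrix.diagonal (fun r => 1 - q r) = 0 := by
          simp only [Qmat, Matrix.diagonal_mul_diagonal]
          rw [show (fun c => (if c ≤ j then (1:F) else 0) * (1 - q c)) = fun _ => 0 by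
            funext c; by_cases h : c ≤ j <;> simp [hq, h]]
          exact Matrix.diagonal_zero
        rw [this, Matrix.mul_zero]
      rw [h2, h3, add_zero]
    calc Pmat i * (Matrix.diagonal d * S * U) * Qmat j
        = (Pmat i * Matrix.diagonal d) * (S * U * Qmat j) := by
          simp only [Matrix.mul_assoc]
      _ = (Matrix.diagonal d * Pmat i) * (S * U * Qmat j) := by rw [hPD]
      _ = Matrix.diagonal d * (Pmat i * S * (U * Qmat j)) := by
          simp only [Matrix.mul_assoc]
      _ = Matrix.diagonal d * ((Pmat i * S * Qmat j) * V) := by rw [h1]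
  rw [hfac]
  have hdetd : IsUnit (Matrix.diagonal d).det := by
    rw [Matrix.det_diagonal]
    exact isUnit_iff_ne_zero.mpr (Finset.prod_ne_zero_iff.mpr
      (fun k _ => (hd k).ne_zero))
  have hVtri : V.BlockTriangular id := by
    intro r c h
    have hlt : (c : Fin n) < r := h
    simp only [hV, Matrix.add_apply, Qmat, Matrix.diagonal_mul, Matrix.mul_diagonal,
      Matrix.diagonal_apply_ne _ (ne_of_gt hlt)]
    simp [hU r c hlt]
  have hdetV : IsUnit V.det := by
    rw [Matrix.det_of_upperTriangular hVtri]
    have : ∀ r, V r r = 1 := by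
      intro r
      simp only [hV, Matrix.add_apply, Qmat, Matrix.diagonal_mul, Matrix.mul_diagonal,
        Matrix.diagonal_apply_eq]
      rw [hU1 r]
      by_cases h : r ≤ j <;> simp [hq, h]
    rw [Finset.prod_eq_one (fun r _ => this r)]
    exact isUnit_one
  rw [Matrix.rank_mul_eq_right_of_isUnit_det _ _ hdetd,
    Matrix.rank_mul_eq_left_of_isUnit_det _ _ hdetV]

lemma perm_eq_of_counts (π π' : Equiv.Perm (Fin n))
    (h : ∀ i j : Fin n, ((Iic j).filter fun k => i ≤ π k).card
      = ((Iic j).filter fun k => i ≤ π' k).card) : π = π' := by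
  classical
  suffices H : ∀ m : ℕ, ∀ j : Fin n, (j : ℕ) = m → π j = π' j by
    ext j
    rw [H (j : ℕ) j rfl]
  intro m
  induction m using Nat.strong_induction_on with
  | _ m IH =>
    intro j hj
    have hIH : ∀ k : Fin n, k < j → π k = π' k := fun k hk =>
      IH (k : ℕ) (hj ▸ hk) k rfl
    have hsplit : ∀ (σ : Equiv.Perm (Fin n)) (i : Fin n),
        ((Iic j).filter fun k => i ≤ σ k).card
        = ((Iio j).filter fun k => i ≤ σ k).card + (if i ≤ σ j then 1 else 0) := by
      intro σ i
      have : (Iic j : Finset (Fin n)) = insert j (Iio j) := by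
        ext k; simp [Finset.mem_Iic, Finset.mem_Iio, Finset.mem_insert, le_iff_lt_or_eq,
          or_comm]
      rw [this, Finset.filter_insert]
      by_cases h : i ≤ σ j
      · rw [if_pos h, Finset.card_insert_of_notMem (by simp), if_pos h]
      · rw [if_neg h, if_neg h, add_zero]
    have hfilter : ∀ i : Fin n, ((Iio j).filter fun k => i ≤ π k)
        = ((Iio j).filter fun k => i ≤ π' k) := by
      intro i
      apply Finset.filter_congr
      intro k hk
      rw [hIH k (Finset.mem_Iio.mp hk)]
    have key : ∀ i : Fin n, (if i ≤ π j then 1 else 0) = (if i ≤ π' j then 1 else 0) := by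
      intro i
      have := h i j
      rw [hsplit π i, hsplit π' i, hfilter i] at this
      omega
    have h1 : π j ≤ π' j := by
      have := key (π j)
      simp only [le_refl, if_pos] at this
      by_contra hc
      rw [if_neg (not_le.mpr (not_le.mp hc))] at this
      · exact one_ne_zero this
    have h2 : π' j ≤ π j := by
      have := key (π' j)
      simp only [le_refl, if_pos] at this
      by_contra hc
      rw [if_neg (not_le.mpr (not_le.mp hc))] at this
      exact zero_ne_one this
    exact le_antisymm h1 h2

end BruhatAux

/-- If `S' = D·S·U` with `S` `π`-shaped, `S'` `π'`-shaped,
`D` invertible diagonal and `U` upper triangular with unit diagonal, then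
`π = π'`; consequently, the subsets `B_π ⊆ GL(n,F)` are pairwise disjoint. -/
theorem stmt_1 (F : Type*) [Field F] (n : ℕ) (hn : 1 ≤ n) :
    (∀ (π π' : Equiv.Perm (Fin n)) (S S' : Matrix (Fin n) (Fin n) F)
      (d : Fin n → F) (U : Matrix (Fin n) (Fin n) F),
      IsPiShaped π S → IsPiShaped π' S' →
      (∀ i, IsUnit (d i)) →
      (∀ i j : Fin n, j < i → U i j = 0) → (∀ i, U i i = 1) →
      S' = Matrix.diagonal d * S * U → π = π') ∧
    (∀ π π' : Equiv.Perm (Fin n), π ≠ π' →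
      Disjoint (PathSubset F n π) (PathSubset F n π')) := by
  classical
  open Matrix Finset BruhatAux in
  have part1 : ∀ (π π' : Equiv.Perm (Fin n)) (S S' : Matrix (Fin n) (Fin n) F)
      (d : Fin n → F) (U : Matrix (Fin n) (Fin n) F),
      IsPiShaped π S → IsPiShaped π' S' →
      (∀ i, IsUnit (d i)) →
      (∀ i j : Fin n, j < i → U i j = 0) → (∀ i, U i i = 1) →
      S' = Matrix.diagonal d * S * U → π = π' := by
    intro π π' S S' d U hS hS' hd hU hU1 heq
    apply perm_eq_of_counts
    intro i j
    calc ((Iic j).filter fun k => i ≤ π k).card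
        = (Pmat i * S * Qmat j).rank := (rank_shaped π S hS i j).symm
      _ = (Pmat i * S' * Qmat j).rank := by
          rw [heq, rank_invariant S d U hd hU hU1 i j]
      _ = ((Iic j).filter fun k => i ≤ π' k).card := rank_shaped π' S' hS' i j
  refine ⟨part1, ?_⟩
  intro π π' hne
  rw [Set.disjoint_left]
  rintro M ⟨d, S, U, hd, hS, hU, hU1, hM⟩ ⟨d', S', U', hd', hS', hU', hU1', hM'⟩
  apply hne
  -- `U'` is invertible with determinant 1
  have hU'tri : U'.BlockTriangular id := fun i j h => hU' i j h
  have hU'det : U'.det = 1 := by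
    rw [Matrix.det_of_upperTriangular hU'tri]
    exact Finset.prod_eq_one fun i _ => hU1' i
  have hU'unit : IsUnit U'.det := by rw [hU'det]; exact isUnit_one
  haveI : Invertible U' := U'.invertibleOfIsUnitDet hU'unit
  set W : Matrix (Fin n) (Fin n) F := U * U'⁻¹ with hW
  have hWtri : W.BlockTriangular id :=
    Matrix.BlockTriangular.mul (fun i j h => hU i j h)
      (Matrix.blockTriangular_inv_of_blockTriangular hU'tri)
  have hWU' : W * U' = U := by
    rw [hW, Matrix.mul_assoc, Matrix.nonsing_inv_mul _ hU'unit, Matrix.mul_one]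
  have hW1 : ∀ i, W i i = 1 := by
    intro i
    have : U i i = ∑ k, W i k * U' k i := by rw [← hWU', Matrix.mul_apply]
    rw [hU1 i] at this
    rw [Fintype.sum_eq_single i (fun k hk => ?_)] at this
    · rw [hU1' i, mul_one] at this; exact this.symm
    · rcases lt_or_gt_of_ne hk with h | h
      · rw [hWtri h, zero_mul]
      · rw [hU' k i h, mul_zero]
  -- `diagonal d'` is invertible
  have hd'det : IsUnit (Matrix.diagonal d').det := by
    rw [Matrix.det_diagonal]
    exact isUnit_iff_ne_zero.mpr (Finset.prod_ne_zero_iff.mpr fun k _ => (hd' k).ne_zero)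
  set e : Fin n → F := fun i => (d' i)⁻¹ * d i with he
  have heunit : ∀ i, IsUnit (e i) :=
    fun i => (isUnit_iff_ne_zero.mpr (inv_ne_zero (hd' i).ne_zero)).mul (hd i)
  have hSeq : S' = Matrix.diagonal e * S * W := by
    have hkey : Matrix.diagonal d' * (Matrix.diagonal e * S * W) * U'
        = Matrix.diagonal d' * S' * U' := by
      calc Matrix.diagonal d' * (Matrix.diagonal e * S * W) * U'
          = (Matrix.diagonal d' * Matrix.diagonal e) * S * (W * U') := by
            simp only [Matrix.mul_assoc]
        _ = Matrix.diagonal d * S * U := by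
            rw [hWU', Matrix.diagonal_mul_diagonal]
            have hde : (fun i => d' i * e i) = d := by
              funext i
              have h0 := (hd' i).ne_zero
              rw [he]
              field_simp
            rw [hde]
        _ = Matrix.diagonal d' * S' * U' := by rw [← hM, hM']
    have h2 := congrArg (fun X => X * U'⁻¹) hkey
    simp only [Matrix.mul_assoc, Matrix.mul_nonsing_inv _ hU'unit, Matrix.mul_one] at h2
    have h3 := congrArg (fun X => (Matrix.diagonal d')⁻¹ * X) h2
    simp only [← Matrix.mul_assoc, Matrix.nonsing_inv_mul _ hd'det, Matrix.one_mul] at h3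
    rw [← h3]
  exact part1 π π' S S' e W hS hS' heunit (fun i j h => hWtri h) hW1 hSeq
end

section
/- Let R be a (possibly noncommutative) unital ring, n ≥ 1, and π a permutation of {1,…,n}. Suppose D and D' are n×n diagonal matrices over R all of whose diagonal entries are units of R; suppose S and S' are π-shaped matrices over R; and suppose X and X' are strictly upper triangular n×n matrices over R. If D·S·(I+X) = D'·S'·(I+X'), then D = D', S = S', and X = X'. -/
section Aux

variable {R : Type*} [Ring R] {n : ℕ}

/-- Strictly upper triangular predicate. -/
def SUT (M : Matrix (Fin n) (Fin n) R) : Prop := ∀ i j : Fin n, j ≤ i → M i j = 0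

lemma SUT.add {A B : Matrix (Fin n) (Fin n) R} (hA : SUT A) (hB : SUT B) : SUT (A + B) :=
  fun i j h => by simp [Matrix.add_apply, hA i j h, hB i j h]

lemma SUT.neg {A : Matrix (Fin n) (Fin n) R} (hA : SUT A) : SUT (-A) :=
  fun i j h => by simp [Matrix.neg_apply, hA i j h]

lemma SUT.mul {A B : Matrix (Fin n) (Fin n) R} (hA : SUT A) (hB : SUT B) : SUT (A * B) := by
  intro i j hji
  rw [Matrix.mul_apply]
  refine Finset.sum_eq_zero fun k _ => ?_
  rcases le_or_gt k i with hk | hk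
  · rw [hA i k hk, zero_mul]
  · rw [hB k j (hji.trans hk.le), mul_zero]

lemma SUT.pow_succ' {A : Matrix (Fin n) (Fin n) R} (hA : SUT A) : ∀ m, SUT (A ^ (m + 1)) := by
  intro m
  induction m with
  | zero => simpa using hA
  | succ m ih => rw [pow_succ]; exact ih.mul hA

lemma SUT.pow_entry {A : Matrix (Fin n) (Fin n) R} (hA : SUT A) :
    ∀ m (i j : Fin n), (j : ℕ) ≤ (i : ℕ) + m → (A ^ (m + 1)) i j = 0 := by
  intro m
  induction m with
  | zero => intro i j hle; simpa using hA i j (Fin.le_def.mpr (by simpa using hle))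
  | succ m ih =>
    intro i j hle
    rw [_root_.pow_succ', Matrix.mul_apply]
    refine Finset.sum_eq_zero fun k _ => ?_
    rcases le_or_gt k i with hk | hk
    · rw [hA i k hk, zero_mul]
    · rw [ih k j (by omega), mul_zero]

lemma SUT.pow_n (hn : 1 ≤ n) {A : Matrix (Fin n) (Fin n) R} (hA : SUT A) : A ^ n = 0 := by
  ext i j
  obtain ⟨m, rfl⟩ : ∃ m, n = m + 1 := ⟨n - 1, by omega⟩
  rw [hA.pow_entry m i j (by omega), Matrix.zero_apply]

/-- Existence of a strictly upper triangular `Z` with `(1+A)(1+Z) = (1+Z)(1+A) = 1`. -/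
lemma SUT.exists_inv (hn : 1 ≤ n) {A : Matrix (Fin n) (Fin n) R} (hA : SUT A) :
    ∃ Z : Matrix (Fin n) (Fin n) R, SUT Z ∧ (1 + A) * (1 + Z) = 1 ∧ (1 + Z) * (1 + A) = 1 := by
  obtain ⟨m, rfl⟩ : ∃ m, n = m + 1 := ⟨n - 1, by omega⟩
  set B : Matrix (Fin (m + 1)) (Fin (m + 1)) R := -A with hB
  have hBS : SUT B := hA.neg
  refine ⟨∑ k ∈ Finset.range m, B ^ (k + 1), ?_, ?_, ?_⟩
  · intro i j hle
    rw [Matrix.sum_apply]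
    exact Finset.sum_eq_zero fun k _ => hBS.pow_succ' k i j hle
  · have h1 : (1 : Matrix (Fin (m+1)) (Fin (m+1)) R) + ∑ k ∈ Finset.range m, B ^ (k + 1)
        = ∑ k ∈ Finset.range (m + 1), B ^ k := by
      rw [Finset.sum_range_succ' (fun k => B ^ k) m]
      simp [add_comm]
    rw [h1]
    have h2 : ((B - 1) * ∑ k ∈ Finset.range (m + 1), B ^ k) = B ^ (m + 1) - 1 :=
      mul_geom_sum B (m + 1)
    have h3 : B ^ (m + 1) = 0 := hBS.pow_n (by omega)
    have h4 : (1 + A) = -(B - 1) := by rw [hB]; noncomm_ring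
    rw [h4, neg_mul, h2, h3]
    simp
  · have h1 : (1 : Matrix (Fin (m+1)) (Fin (m+1)) R) + ∑ k ∈ Finset.range m, B ^ (k + 1)
        = ∑ k ∈ Finset.range (m + 1), B ^ k := by
      rw [Finset.sum_range_succ' (fun k => B ^ k) m]
      simp [add_comm]
    rw [h1]
    have h2 : ((∑ k ∈ Finset.range (m + 1), B ^ k) * (B - 1)) = B ^ (m + 1) - 1 :=
      geom_sum_mul B (m + 1)
    have h3 : B ^ (m + 1) = 0 := hBS.pow_n (by omega)
    have h4 : (1 + A) = -(B - 1) := by rw [hB]; noncomm_ring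
    rw [h4, mul_neg, h2, h3]
    simp

lemma entry_formula (dd : Fin n → R) (A W : Matrix (Fin n) (Fin n) R) (i j : Fin n) :
    (Matrix.diagonal dd * A * (1 + W)) i j = dd i * A i j + ∑ k, dd i * A i k * W k j := by
  rw [mul_add, mul_one, Matrix.add_apply, Matrix.diagonal_mul, Matrix.mul_apply]
  simp only [Matrix.diagonal_mul]

end Aux

/-- Over any unital ring `R`: if `D·S·(I+X) = D'·S'·(I+X')`
where `D, D'` are diagonal matrices with unit diagonal entries, `S, S'` are
`π`-shaped, and `X, X'` are strictly upper triangular, then `D = D'`,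
`S = S'`, and `X = X'`. -/
theorem stmt_3 (R : Type*) [Ring R] (n : ℕ) (hn : 1 ≤ n) (π : Equiv.Perm (Fin n))
    (d d' : Fin n → R) (hd : ∀ i, IsUnit (d i)) (hd' : ∀ i, IsUnit (d' i))
    (S S' : Matrix (Fin n) (Fin n) R)
    (hS : (∀ j, S (π j) j = 1) ∧ ∀ i j : Fin n, (π j < i ∨ π.symm i < j) → S i j = 0)
    (hS' : (∀ j, S' (π j) j = 1) ∧ ∀ i j : Fin n, (π j < i ∨ π.symm i < j) → S' i j = 0)
    (X X' : Matrix (Fin n) (Fin n) R)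
    (hX : ∀ i j : Fin n, j ≤ i → X i j = 0) (hX' : ∀ i j : Fin n, j ≤ i → X' i j = 0)
    (h : Matrix.diagonal d * S * (1 + X) = Matrix.diagonal d' * S' * (1 + X')) :
    d = d' ∧ S = S' ∧ X = X' := by
  -- inverse of 1 + X'
  obtain ⟨Z', hZ'S, hZ'1, hZ'2⟩ := SUT.exists_inv hn (show SUT X' from hX')
  -- W := X + Z' + X*Z', so that (1+X)(1+Z') = 1 + W
  set W : Matrix (Fin n) (Fin n) R := X + Z' + X * Z' with hWdef
  have hWS : SUT W := ((show SUT X from hX).add hZ'S).add ((show SUT X from hX).mul hZ'S)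
  have hfact : (1 + X) * (1 + Z') = 1 + W := by rw [hWdef]; noncomm_ring
  have h2 : Matrix.diagonal d * S * (1 + W) = Matrix.diagonal d' * S' := by
    calc Matrix.diagonal d * S * (1 + W) = Matrix.diagonal d * S * ((1 + X) * (1 + Z')) := by
          rw [hfact]
      _ = (Matrix.diagonal d * S * (1 + X)) * (1 + Z') := by noncomm_ring
      _ = (Matrix.diagonal d' * S' * (1 + X')) * (1 + Z') := by rw [h]
      _ = Matrix.diagonal d' * S' * ((1 + X') * (1 + Z')) := by noncomm_ring
      _ = Matrix.diagonal d' * S' := by rw [hZ'1, mul_one]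
  -- entrywise form of h2
  have h2e : ∀ i j, d i * S i j + ∑ k, d i * S i k * W k j = d' i * S' i j := by
    intro i j
    have := congrFun (congrFun h2 i) j
    rwa [entry_formula, Matrix.diagonal_mul] at this
  -- W vanishes
  have hWzero : ∀ (m : ℕ) (j k0 : Fin n), (k0 : ℕ) < m → W k0 j = 0 := by
    intro m
    induction m with
    | zero => intro j k0 hk; omega
    | succ m ih =>
      intro j k0 hk
      rcases le_or_gt j k0 with hle | hlt
      · exact hWS k0 j hle
      · -- use the row π k0
        have hsymm : π.symm (π k0) = k0 := Equiv.symm_apply_apply π k0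
        have hSj : S (π k0) j = 0 := hS.2 _ _ (Or.inr (by rw [hsymm]; exact hlt))
        have hS'j : S' (π k0) j = 0 := hS'.2 _ _ (Or.inr (by rw [hsymm]; exact hlt))
        have heq := h2e (π k0) j
        rw [hSj, hS'j, mul_zero, mul_zero, zero_add] at heq
        have hsum : ∑ k, d (π k0) * S (π k0) k * W k j = d (π k0) * W k0 j := by
          rw [Finset.sum_eq_single k0]
          · rw [hS.1 k0, mul_one]
          · intro k _ hkne
            rcases lt_or_gt_of_ne hkne with hlt2 | hgt
            · rw [ih j k (by have := Fin.lt_def.mp hlt2; omega), mul_zero]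
            · rw [hS.2 _ _ (Or.inr (by rw [hsymm]; exact hgt)), mul_zero, zero_mul]
          · intro hmem; exact absurd (Finset.mem_univ k0) hmem
        rw [hsum] at heq
        exact (hd (π k0)).mul_left_cancel (by rw [heq, mul_zero])
  have hW0 : W = 0 := by
    ext i j
    exact (hWzero n j i i.isLt).trans (by simp)
  -- hence 1 + X = 1 + X'
  have hXX' : X = X' := by
    have hinv : (1 + X) * (1 + Z') = 1 := by rw [hfact, hW0, add_zero]
    have : (1 + X : Matrix (Fin n) (Fin n) R) = 1 + X' := by
      calc (1 + X : Matrix (Fin n) (Fin n) R) = (1 + X) * ((1 + Z') * (1 + X')) := by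
            rw [hZ'2, mul_one]
        _ = ((1 + X) * (1 + Z')) * (1 + X') := by rw [mul_assoc]
        _ = 1 + X' := by rw [hinv, one_mul]
    exact add_left_cancel this
  -- cancel (1 + X) on the right of h
  obtain ⟨Z, hZS, hZ1, hZ2⟩ := SUT.exists_inv hn (show SUT X from hX)
  have hDS : Matrix.diagonal d * S = Matrix.diagonal d' * S' := by
    calc Matrix.diagonal d * S
        = Matrix.diagonal d * S * ((1 + X) * (1 + Z)) := by rw [hZ1, mul_one]
      _ = (Matrix.diagonal d * S * (1 + X)) * (1 + Z) := by noncomm_ring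
      _ = (Matrix.diagonal d' * S' * (1 + X)) * (1 + Z) := by rw [h, hXX']
      _ = Matrix.diagonal d' * S' * ((1 + X) * (1 + Z)) := by noncomm_ring
      _ = Matrix.diagonal d' * S' := by rw [hZ1, mul_one]
  have hDSe : ∀ i j, d i * S i j = d' i * S' i j := by
    intro i j
    have := congrFun (congrFun hDS i) j
    rwa [Matrix.diagonal_mul, Matrix.diagonal_mul] at this
  have hdd : d = d' := by
    funext i
    have h1 : S i (π.symm i) = 1 := by
      have := hS.1 (π.symm i)
      rwa [Equiv.apply_symm_apply] at this
    have h1' : S' i (π.symm i) = 1 := by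
      have := hS'.1 (π.symm i)
      rwa [Equiv.apply_symm_apply] at this
    have := hDSe i (π.symm i)
    rwa [h1, h1', mul_one, mul_one] at this
  have hSS' : S = S' := by
    ext i j
    exact (hd i).mul_left_cancel (by rw [hDSe i j, hdd])
  exact ⟨hdd, hSS', hXX'⟩
end

section
/- Let n ≥ 1 and let π be a permutation of {1,…,n}. Let A be the free unital ℤ-algebra (free associative algebra) on the set of generators G = G_p ⊔ G_x, where G_p = { (i,j) : 1 ≤ i,j ≤ n, i < π(j) and j < π⁻¹(i) } with generators denoted p_{i,j}, and G_x = { (i,j) : 1 ≤ i < j ≤ n } with generators denoted x_{i,j}. Define the n×n matrix S over A by S_{π(j),j} = 1 for all j, S_{i,j} = p_{i,j} for (i,j) ∈ G_p, and S_{i,j} = 0 otherwise, and define the strictly upper triangular matrix X by X_{i,j} = x_{i,j} for i < j and X_{i,j} = 0 otherwise. Then the ℤ-subalgebra of A generated by the entries of the matrix product S·(I+X) is all of A. -/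
/-- Generators `p_{i,j}` indexed by positions with `i < π j` and `j < π⁻¹ i`. -/
abbrev GenP (n : ℕ) (π : Equiv.Perm (Fin n)) :=
  {ij : Fin n × Fin n // ij.1 < π ij.2 ∧ ij.2 < π.symm ij.1}

/-- Generators `x_{i,j}` indexed by pairs `i < j`. -/
abbrev GenX (n : ℕ) := {ij : Fin n × Fin n // ij.1 < ij.2}

/-- The `π`-shaped matrix `S` over the free `ℤ`-algebra: `S (π j) j = 1`,
`S i j = p_{i,j}` for `(i,j)` with `i < π j` and `j < π⁻¹ i`, else `0`. -/
noncomputable def Smat (n : ℕ) (π : Equiv.Perm (Fin n)) :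
    Matrix (Fin n) (Fin n) (FreeAlgebra ℤ (GenP n π ⊕ GenX n)) :=
  Matrix.of fun i j =>
    if i = π j then 1
    else if h : i < π j ∧ j < π.symm i then FreeAlgebra.ι ℤ (Sum.inl ⟨(i, j), h⟩)
    else 0

/-- The strictly upper triangular matrix `X` with `X i j = x_{i,j}` for `i < j`. -/
noncomputable def Xmat (n : ℕ) (π : Equiv.Perm (Fin n)) :
    Matrix (Fin n) (Fin n) (FreeAlgebra ℤ (GenP n π ⊕ GenX n)) :=
  Matrix.of fun i j =>
    if h : i < j then FreeAlgebra.ι ℤ (Sum.inr ⟨(i, j), h⟩) else 0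

/-- The `ℤ`-subalgebra of the free algebra generated by the
entries of `S·(I+X)` is the whole algebra. -/
theorem stmt_4 (n : ℕ) (hn : 1 ≤ n) (π : Equiv.Perm (Fin n)) :
    Algebra.adjoin ℤ
      (Set.range fun p : Fin n × Fin n => (Smat n π * (1 + Xmat n π)) p.1 p.2) = ⊤ := by
  set A' := Algebra.adjoin ℤ
      (Set.range fun p : Fin n × Fin n => (Smat n π * (1 + Xmat n π)) p.1 p.2) with hA'
  have hM : ∀ i j, Smat n π i j + ∑ m, Smat n π i m * Xmat n π m j ∈ A' := by
    intro i j
    have h : (Smat n π * (1 + Xmat n π)) i j ∈ A' :=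
      Algebra.subset_adjoin ⟨(i, j), rfl⟩
    rwa [mul_add, mul_one, Matrix.add_apply, Matrix.mul_apply] at h
  have hS1 : ∀ k : Fin n, Smat n π (π k) k = 1 := by
    intro k; simp [Smat]
  have hS0 : ∀ k m : Fin n, k < m → Smat n π (π k) m = 0 := by
    intro k m hkm
    have h1 : π k ≠ π m := fun h => absurd (π.injective h) hkm.ne
    have h2 : ¬(π k < π m ∧ m < π.symm (π k)) := by
      rw [Equiv.symm_apply_apply]
      rintro ⟨-, h⟩
      exact absurd h (not_lt.2 hkm.le)
    simp only [Smat, Matrix.of_apply, if_neg h1, dif_neg h2]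
  have hXlt : ∀ (m j : Fin n) (h : m < j),
      Xmat n π m j = FreeAlgebra.ι ℤ (Sum.inr ⟨(m, j), h⟩) := by
    intro m j h; simp [Xmat, h]
  have hXge : ∀ (m j : Fin n), ¬ m < j → Xmat n π m j = 0 := by
    intro m j h; simp [Xmat, h]
  -- main induction on the column `j`
  have key : ∀ N : ℕ, ∀ j : Fin n, (j : ℕ) < N →
      (∀ i, Smat n π i j ∈ A') ∧
      ∀ (k : Fin n) (h : k < j), FreeAlgebra.ι ℤ (Sum.inr ⟨(k, j), h⟩) ∈ A' := by
    intro N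
    induction N with
    | zero => intro j hj; omega
    | succ N IHj =>
      intro j hj
      have IHj' : ∀ j' : Fin n, j' < j →
          (∀ i, Smat n π i j' ∈ A') ∧
          ∀ (k : Fin n) (h : k < j'), FreeAlgebra.ι ℤ (Sum.inr ⟨(k, j'), h⟩) ∈ A' := by
        intro j' hj'
        exact IHj j' (by omega)
      -- first: the `x` generators in column `j`
      have hx : ∀ (k : Fin n) (h : k < j), FreeAlgebra.ι ℤ (Sum.inr ⟨(k, j), h⟩) ∈ A' := by
        have : ∀ M : ℕ, ∀ k : Fin n, (k : ℕ) < M → ∀ h : k < j,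
            FreeAlgebra.ι ℤ (Sum.inr ⟨(k, j), h⟩) ∈ A' := by
          intro M
          induction M with
          | zero => intro k hk; omega
          | succ M IHk =>
            intro k hk hkj
            have hmem := hM (π k) j
            rw [hS0 k j hkj, zero_add] at hmem
            have hsplit : ∑ m, Smat n π (π k) m * Xmat n π m j
                = FreeAlgebra.ι ℤ (Sum.inr ⟨(k, j), hkj⟩)
                  + ∑ m ∈ Finset.univ.erase k, Smat n π (π k) m * Xmat n π m j := by
              rw [← Finset.add_sum_erase _ _ (Finset.mem_univ k), hS1, one_mul,
                hXlt k j hkj]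
            rw [hsplit] at hmem
            have hrest : ∑ m ∈ Finset.univ.erase k, Smat n π (π k) m * Xmat n π m j ∈ A' := by
              refine Subalgebra.sum_mem _ fun m hm => ?_
              have hmk : m ≠ k := Finset.ne_of_mem_erase hm
              rcases lt_or_gt_of_ne hmk with hlt | hgt
              · have hmj : m < j := hlt.trans hkj
                rw [hXlt m j hmj]
                exact Subalgebra.mul_mem _ ((IHj' m hmj).1 (π k))
                  (IHk m (by omega) hmj)
              · rw [hS0 k m hgt, zero_mul]
                exact Subalgebra.zero_mem _
            have h2 := Subalgebra.sub_mem _ hmem hrest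
            rwa [add_sub_cancel_right] at h2
        exact fun k => this ((k : ℕ) + 1) k (Nat.lt_succ_self _)
      refine ⟨fun i => ?_, hx⟩
      have hmem := hM i j
      have hrest : ∑ m, Smat n π i m * Xmat n π m j ∈ A' := by
        refine Subalgebra.sum_mem _ fun m _ => ?_
        by_cases hmj : m < j
        · rw [hXlt m j hmj]
          exact Subalgebra.mul_mem _ ((IHj' m hmj).1 i) (hx m hmj)
        · rw [hXge m j hmj, mul_zero]
          exact Subalgebra.zero_mem _
      have h2 := Subalgebra.sub_mem _ hmem hrest
      rwa [add_sub_cancel_right] at h2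
  have key' : ∀ j : Fin n, (∀ i, Smat n π i j ∈ A') ∧
      ∀ (k : Fin n) (h : k < j), FreeAlgebra.ι ℤ (Sum.inr ⟨(k, j), h⟩) ∈ A' :=
    fun j => key ((j : ℕ) + 1) j (Nat.lt_succ_self _)
  rw [eq_top_iff, ← FreeAlgebra.adjoin_range_ι ℤ (GenP n π ⊕ GenX n)]
  apply Algebra.adjoin_le
  rintro _ ⟨g, rfl⟩
  rcases g with ⟨⟨i, j⟩, h⟩ | ⟨⟨k, j⟩, h⟩
  · have hne : i ≠ π j := by
      intro he
      rw [he, Equiv.symm_apply_apply] at h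
      exact absurd h.2 (lt_irrefl j)
    have hS : Smat n π i j = FreeAlgebra.ι ℤ (Sum.inl ⟨(i, j), h⟩) := by
      simp [Smat, hne, h]
    rw [← hS]
    exact (key' j).1 i
  · exact (key' j).2 k h
end

section
/- Let m be an odd positive integer and let s : ℤ → ℤ be a finitely supported function. Then the sequence N ↦ Σ_{k ∈ ℤ, |k| ≤ 2mN, k ≡ 0 (mod m)} X^k(s) is eventually constant, and its eventual value equals Σ_{l=0}^{m-1} (-1)^l ( Σ_{i ≡ l (mod m)} s_i ). -/
/-- The weight `η^k(l)`, equal to `(-1)^(l-k)` for `l ≥ k` and `(-1)^(l-k+1)`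
for `l < k`. -/
def eta (k l : ℤ) : ℤ :=
  if k ≤ l then (-1) ^ (l - k).natAbs else (-1) ^ ((k - l).natAbs + 1)

/-- The shifted Euler characteristic
`X^k(s) = Σ_{l ≥ 0} (-1)^l s_{k+l} + Σ_{l < 0} (-1)^{l+1} s_{k+l} = Σ_l η^k(l) s_l`. -/
noncomputable def Xchi (k : ℤ) (s : ℤ → ℤ) : ℤ := ∑ᶠ l : ℤ, eta k l * s l

/-- Sign of an integer's parity. -/
def epsZ (n : ℤ) : ℤ := if Even n then 1 else -1

lemma epsZ_mul_self (n : ℤ) : epsZ n * epsZ n = 1 := by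
  unfold epsZ; split <;> ring

lemma neg_one_pow_natAbs (n : ℤ) : (-1 : ℤ) ^ n.natAbs = epsZ n := by
  unfold epsZ
  by_cases h : Even n
  · rw [if_pos h, Even.neg_one_pow (Int.natAbs_even.mpr h)]
  · rw [if_neg h, Odd.neg_one_pow (Int.natAbs_odd.mpr (Int.not_even_iff_odd.mp h))]

lemma neg_one_pow_natCast (n : ℕ) : (-1 : ℤ) ^ n = epsZ (n : ℤ) := by
  have := neg_one_pow_natAbs (n : ℤ)
  simpa using this

lemma epsZ_add (a b : ℤ) : epsZ (a + b) = epsZ a * epsZ b := by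
  unfold epsZ
  by_cases ha : Even a <;> by_cases hb : Even b <;>
    simp [ha, hb, Int.even_add, *]

lemma epsZ_neg (a : ℤ) : epsZ (-a) = epsZ a := by
  unfold epsZ; simp

lemma epsZ_sub (a b : ℤ) : epsZ (a - b) = epsZ a * epsZ b := by
  rw [sub_eq_add_neg, epsZ_add, epsZ_neg]

lemma epsZ_odd_mul {m : ℤ} (hm : Odd m) (j : ℤ) : epsZ (m * j) = epsZ j := by
  unfold epsZ
  simp [Int.even_mul, Int.not_even_iff_odd.mpr hm]

lemma eta_eq (k l : ℤ) : eta k l = (if k ≤ l then 1 else -1) * epsZ (l - k) := by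
  unfold eta
  split
  · rw [neg_one_pow_natAbs, one_mul]
  · rw [pow_succ, neg_one_pow_natAbs, ← epsZ_neg (k - l), neg_sub]
    ring

/-- Alternating sum over a range with a single sign flip after `t`. -/
lemma range_alt_sum (t M : ℕ) (ht : t < M) (hM : Odd M) :
    ∑ i ∈ Finset.range M, (if i ≤ t then ((-1 : ℤ)) ^ i else -(-1) ^ i) = (-1) ^ t := by
  have key : ∀ i : ℕ, (if i ≤ t then ((-1 : ℤ)) ^ i else -(-1) ^ i)
      = 2 * (if i ≤ t then (-1 : ℤ) ^ i else 0) - (-1) ^ i := by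
    intro i; split <;> ring
  rw [Finset.sum_congr rfl (fun i _ => key i), Finset.sum_sub_distrib, ← Finset.mul_sum]
  have h1 : ∑ i ∈ Finset.range M, (if i ≤ t then (-1 : ℤ) ^ i else 0)
      = ∑ i ∈ Finset.range (t + 1), (-1 : ℤ) ^ i := by
    rw [← Finset.sum_filter]
    congr 1
    ext i
    simp only [Finset.mem_filter, Finset.mem_range, Nat.lt_succ_iff]
    omega
  rw [h1, neg_one_geom_sum, neg_one_geom_sum, if_neg (Nat.not_even_iff_odd.mpr hM)]
  rcases Nat.even_or_odd t with h | h
  · rw [if_neg (by simpa [Nat.even_add_one] using h), Even.neg_one_pow h]; ring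
  · rw [if_pos (by simpa [Nat.even_add_one, Nat.not_even_iff_odd] using h),
      Odd.neg_one_pow h]; ring

lemma key_sum (m : ℕ) (hodd : Odd m) (hm : 0 < m) (l : ℤ) (N : ℕ)
    (h1 : -(2 * (N : ℤ)) ≤ l / m) (h2 : l / m < 2 * (N : ℤ)) :
    ∑ k ∈ (Finset.Icc (-(2 * (m : ℤ) * N)) (2 * (m : ℤ) * N)).filter
        (fun k => (m : ℤ) ∣ k), eta k l = epsZ (l % m) := by
  have hmz : (0 : ℤ) < m := by exact_mod_cast hm
  have hmodd : Odd (m : ℤ) := by exact_mod_cast hodd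
  set c : ℤ := l / m with hc
  have himg : (Finset.Icc (-(2 * (m : ℤ) * N)) (2 * (m : ℤ) * N)).filter
      (fun k => (m : ℤ) ∣ k)
      = (Finset.Icc (-(2 * (N : ℤ))) (2 * N)).image (fun j => (m : ℤ) * j) := by
    ext k
    simp only [Finset.mem_filter, Finset.mem_Icc, Finset.mem_image]
    constructor
    · rintro ⟨⟨hk1, hk2⟩, j, rfl⟩
      exact ⟨j, ⟨by nlinarith, by nlinarith⟩, rfl⟩
    · rintro ⟨j, ⟨hj1, hj2⟩, rfl⟩
      exact ⟨⟨by nlinarith, by nlinarith⟩, ⟨j, rfl⟩⟩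
  rw [himg, Finset.sum_image (fun x _ y _ h => mul_left_cancel₀ (ne_of_gt hmz) h)]
  have hterm : ∀ j : ℤ, eta ((m : ℤ) * j) l
      = (if j ≤ c then 1 else -1) * (epsZ l * epsZ j) := by
    intro j
    rw [eta_eq, epsZ_sub, epsZ_odd_mul hmodd]
    congr 1
    have hiff : ((m : ℤ) * j ≤ l) ↔ (j ≤ c) := by
      rw [hc, Int.le_ediv_iff_mul_le hmz, mul_comm]
    simp only [hiff]
  rw [Finset.sum_congr rfl (fun j _ => hterm j)]
  have himg2 : Finset.Icc (-(2 * (N : ℤ))) (2 * N)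
      = (Finset.range (4 * N + 1)).image (fun i : ℕ => (i : ℤ) - 2 * N) := by
    ext k
    simp only [Finset.mem_Icc, Finset.mem_image, Finset.mem_range]
    constructor
    · rintro ⟨hk1, hk2⟩
      exact ⟨(k + 2 * N).toNat, by omega, by omega⟩
    · rintro ⟨i, hi, rfl⟩
      omega
  rw [himg2, Finset.sum_image (fun x _ y _ h => by omega)]
  set t : ℕ := (c + 2 * N).toNat with htdef
  have htc : (t : ℤ) = c + 2 * N := Int.toNat_of_nonneg (by omega)
  have hterm2 : ∀ i ∈ Finset.range (4 * N + 1),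
      (if (i : ℤ) - 2 * N ≤ c then (1:ℤ) else -1) * (epsZ l * epsZ ((i : ℤ) - 2 * N))
      = epsZ l * (if i ≤ t then ((-1 : ℤ)) ^ i else -(-1) ^ i) := by
    intro i _
    have hcond : ((i : ℤ) - 2 * N ≤ c) ↔ (i ≤ t) := by omega
    have heps : epsZ ((i : ℤ) - 2 * N) = (-1 : ℤ) ^ i := by
      rw [epsZ_sub, neg_one_pow_natCast]
      have : epsZ (2 * (N : ℤ)) = 1 := by
        unfold epsZ; rw [if_pos ⟨(N : ℤ), by ring⟩]
      rw [this, mul_one]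
    simp only [hcond, heps]
    split <;> ring
  rw [Finset.sum_congr rfl hterm2, ← Finset.mul_sum,
    range_alt_sum t (4 * N + 1) (by omega) ⟨2 * N, by ring⟩]
  have h3 : (-1 : ℤ) ^ t = epsZ c := by
    rw [neg_one_pow_natCast, htc, epsZ_add]
    have : epsZ (2 * (N : ℤ)) = 1 := by
      unfold epsZ; rw [if_pos ⟨(N : ℤ), by ring⟩]
    rw [this, mul_one]
  have h4 : epsZ l = epsZ c * epsZ (l % m) := by
    conv_lhs => rw [← Int.mul_ediv_add_emod l m]
    rw [epsZ_add, ← hc, epsZ_odd_mul hmodd]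
  rw [h3, h4]
  calc epsZ c * epsZ (l % m) * epsZ c = epsZ c * epsZ c * epsZ (l % m) := by ring
    _ = epsZ (l % m) := by rw [epsZ_mul_self, one_mul]

/-- For odd `m > 0` and finitely supported `s : ℤ → ℤ`, the
sequence `N ↦ Σ_{|k| ≤ 2mN, k ≡ 0 (mod m)} X^k(s)` is eventually constant with
eventual value `Σ_{l=0}^{m-1} (-1)^l (Σ_{i ≡ l (mod m)} s_i)`. -/
theorem stmt_5 (m : ℕ) (hodd : Odd m) (hm : 0 < m) (s : ℤ →₀ ℤ) :
    ∃ N₀ : ℕ, ∀ N ≥ N₀,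
      (∑ k ∈ (Finset.Icc (-(2 * (m : ℤ) * (N : ℤ))) (2 * (m : ℤ) * (N : ℤ))).filter
          (fun k => (m : ℤ) ∣ k), Xchi k s) =
      ∑ l ∈ Finset.range m, (-1) ^ l *
        ∑ i ∈ s.support.filter (fun i => i % (m : ℤ) = (l : ℤ)), s i := by
  refine ⟨(s.support.sup fun i => (i / (m : ℤ)).natAbs) + 1, fun N hN => ?_⟩
  have hmz : (0 : ℤ) < m := by exact_mod_cast hm
  -- Xchi as a finite sum over the support
  have hXchi : ∀ k : ℤ, Xchi k s = ∑ l ∈ s.support, eta k l * s l := by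
    intro k
    apply finsum_eq_finset_sum_of_support_subset
    intro l hl
    simp only [Function.mem_support] at hl
    simp only [Finset.mem_coe, Finsupp.mem_support_iff]
    intro h
    apply hl
    rw [h, mul_zero]
  rw [Finset.sum_congr rfl (fun k _ => hXchi k), Finset.sum_comm]
  -- evaluate the inner sums with key_sum
  have hL : ∀ l ∈ s.support,
      ∑ k ∈ (Finset.Icc (-(2 * (m : ℤ) * (N : ℤ))) (2 * (m : ℤ) * (N : ℤ))).filter
          (fun k => (m : ℤ) ∣ k), eta k l * s l = epsZ (l % m) * s l := by
    intro l hl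
    have hb : (l / (m : ℤ)).natAbs ≤ s.support.sup fun i => (i / (m : ℤ)).natAbs :=
      Finset.le_sup (f := fun i => (i / (m : ℤ)).natAbs) hl
    rw [← Finset.sum_mul, key_sum m hodd hm l N (by omega) (by omega)]
  rw [Finset.sum_congr rfl hL]
  -- regroup the right-hand side by residues
  have hR : ∀ l ∈ Finset.range m,
      (-1 : ℤ) ^ l * ∑ i ∈ s.support.filter (fun i => i % (m : ℤ) = (l : ℤ)), s i
      = ∑ i ∈ s.support.filter (fun i => i % (m : ℤ) = (l : ℤ)), epsZ (i % m) * s i := by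
    intro l _
    rw [Finset.mul_sum]
    refine Finset.sum_congr rfl (fun i hi => ?_)
    have hi2 : i % (m : ℤ) = (l : ℤ) := (Finset.mem_filter.mp hi).2
    rw [hi2, ← neg_one_pow_natCast]
  rw [Finset.sum_congr rfl hR]
  have hmaps : ∀ i ∈ s.support, i % (m : ℤ) ∈ (Finset.range m).image (Nat.cast : ℕ → ℤ) := by
    intro i _
    have h1 : 0 ≤ i % (m : ℤ) := Int.emod_nonneg i (ne_of_gt hmz)
    have h2 : i % (m : ℤ) < m := Int.emod_lt_of_pos i hmz
    simp only [Finset.mem_image, Finset.mem_range]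
    exact ⟨(i % (m : ℤ)).toNat, by omega, by omega⟩
  have hfib := Finset.sum_fiberwise_of_maps_to hmaps (fun i => epsZ (i % m) * s i)
  rw [← hfib, Finset.sum_image (fun x _ y _ h => by exact_mod_cast h)]
end

section
/- Let m be an even positive integer and let s : ℤ → ℤ be a finitely supported function. Then the sequence N ↦ Σ_{k ∈ ℤ, |k| ≤ N, k ≡ 0 (mod m)} X^k(s) is eventually constant, and its eventual value equals Σ_{k ∈ ℤ} (2k+1)·( Σ_{l=0}^{m-1} (-1)^l s_{mk+l} ), where the outer sum has only finitely many nonzero terms. -/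
lemma negOne_pow_natAbs_congr {a b : ℤ} (h : Even (a - b)) :
    (-1 : ℤ) ^ a.natAbs = (-1) ^ b.natAbs := by
  have hab : Even a ↔ Even b := Int.even_sub.mp h
  rcases Int.even_or_odd a with ha | ha
  · rw [(Int.natAbs_even.mpr ha).neg_one_pow,
      (Int.natAbs_even.mpr (hab.mp ha)).neg_one_pow]
  · have hb : Odd b := by
      rcases Int.even_or_odd b with hb | hb
      · exact absurd (hab.mpr hb) (by simpa [Int.not_even_iff_odd] using ha)
      · exact hb
    rw [(Int.natAbs_odd.mpr ha).neg_one_pow, (Int.natAbs_odd.mpr hb).neg_one_pow]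

lemma eta_mul_even {m : ℤ} (hme : Even m) (j l : ℤ) :
    eta (m * j) l = (if m * j ≤ l then 1 else -1) * (-1 : ℤ) ^ l.natAbs := by
  have hmj : Even (m * j) := hme.mul_right j
  unfold eta
  split_ifs with h
  · rw [one_mul]
    exact negOne_pow_natAbs_congr (by rw [sub_sub_cancel_left]; exact hmj.neg)
  · rw [pow_succ, negOne_pow_natAbs_congr (a := m * j - l) (b := l)
      (by rw [sub_sub]; exact hmj.sub ⟨l, rfl⟩)]
    ring

/-- The total weight of `l` in the truncated sum over multiples of `m`,
for large enough `N`. -/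
lemma weight_sum (m : ℕ) (heven : Even m) (hm : 0 < m) (l : ℤ) (N : ℕ)
    (hN : (m : ℤ) * (l.natAbs + 1) ≤ N) :
    ∑ k ∈ (Finset.Icc (-(N : ℤ)) (N : ℤ)).filter (fun k => (m : ℤ) ∣ k), eta k l
      = (2 * (l / (m : ℤ)) + 1) * (-1) ^ l.natAbs := by
  have hm' : (0 : ℤ) < m := by exact_mod_cast hm
  have hme : Even (m : ℤ) := by exact_mod_cast heven
  set M : ℤ := (N : ℤ) / m with hM
  set q : ℤ := l / (m : ℤ) with hq
  -- bounds on q and M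
  have habs : ((l.natAbs : ℤ)) = |l| := (Int.abs_eq_natAbs l).symm
  have hlq : q ≤ (l.natAbs : ℤ) := by
    have h1 : l ≤ (l.natAbs : ℤ) * m := by
      rw [habs]; nlinarith [le_abs_self l, abs_nonneg l]
    have := Int.ediv_le_ediv hm' h1
    rwa [Int.mul_ediv_cancel _ (ne_of_gt hm')] at this
  have hql : -(l.natAbs : ℤ) ≤ q := by
    have h1 : -(l.natAbs : ℤ) * m ≤ l := by
      rw [habs]; nlinarith [neg_abs_le l, abs_nonneg l]
    have := Int.ediv_le_ediv hm' h1
    rwa [Int.mul_ediv_cancel _ (ne_of_gt hm')] at this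
  have hMl : (l.natAbs : ℤ) + 1 ≤ M := by
    rw [hM, Int.le_ediv_iff_mul_le hm']
    nlinarith
  have himg : (Finset.Icc (-(N : ℤ)) (N : ℤ)).filter (fun k => (m : ℤ) ∣ k)
      = (Finset.Icc (-M) M).image (fun j => (m : ℤ) * j) := by
    ext k
    simp only [Finset.mem_filter, Finset.mem_Icc, Finset.mem_image]
    constructor
    · rintro ⟨⟨h1, h2⟩, j, rfl⟩
      refine ⟨j, ⟨?_, ?_⟩, rfl⟩
      · rw [neg_le, hM, Int.le_ediv_iff_mul_le hm']; nlinarith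
      · rw [hM, Int.le_ediv_iff_mul_le hm']; nlinarith
    · rintro ⟨j, ⟨h1, h2⟩, rfl⟩
      have hj2 : j * m ≤ N := (Int.le_ediv_iff_mul_le hm').mp h2
      have hj1 : -j * m ≤ N := (Int.le_ediv_iff_mul_le hm').mp (by omega)
      exact ⟨⟨by nlinarith, by nlinarith⟩, j, rfl⟩
  rw [himg, Finset.sum_image (fun a _ b _ h => mul_left_cancel₀ (ne_of_gt hm') h)]
  have heta : ∀ j ∈ Finset.Icc (-M) M,
      eta ((m : ℤ) * j) l = (if j ≤ q then 1 else -1) * (-1 : ℤ) ^ l.natAbs := by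
    intro j _
    rw [eta_mul_even hme]
    congr 1
    have : (m : ℤ) * j ≤ l ↔ j ≤ q := by
      rw [hq, Int.le_ediv_iff_mul_le hm', mul_comm]
    simp [this]
  rw [Finset.sum_congr rfl heta, ← Finset.sum_mul]
  congr 1
  have h1 : (Finset.Icc (-M) M).filter (fun j => j ≤ q) = Finset.Icc (-M) q := by
    ext j; simp only [Finset.mem_filter, Finset.mem_Icc]; omega
  have h2 : (Finset.Icc (-M) M).filter (fun j => ¬ j ≤ q) = Finset.Icc (q + 1) M := by
    ext j; simp only [Finset.mem_filter, Finset.mem_Icc]; omega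
  rw [Finset.sum_ite, h1, h2, Finset.sum_const, Finset.sum_const,
    Int.card_Icc, Int.card_Icc, nsmul_eq_mul, nsmul_eq_mul, mul_one, mul_neg_one]
  omega

/-- For even `m > 0` and finitely supported `s : ℤ → ℤ`, the
sequence `N ↦ Σ_{|k| ≤ N, k ≡ 0 (mod m)} X^k(s)` is eventually constant with
eventual value `Σ_{k ∈ ℤ} (2k+1)·(Σ_{l=0}^{m-1} (-1)^l s_{mk+l})` (the outer
sum has finitely many nonzero terms). -/
theorem stmt_7 (m : ℕ) (heven : Even m) (hm : 0 < m) (s : ℤ →₀ ℤ) :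
    ∃ N₀ : ℕ, ∀ N ≥ N₀,
      (∑ k ∈ (Finset.Icc (-(N : ℤ)) (N : ℤ)).filter (fun k => (m : ℤ) ∣ k), Xchi k s) =
      ∑ᶠ k : ℤ, (2 * k + 1) *
        ∑ l ∈ Finset.range m, (-1) ^ l * s ((m : ℤ) * k + (l : ℤ)) := by
  have hm' : (0 : ℤ) < m := by exact_mod_cast hm
  have hmz : (m : ℤ) ≠ 0 := ne_of_gt hm'
  have hme : Even (m : ℤ) := by exact_mod_cast heven
  set B : ℕ := s.support.sup (fun l => l.natAbs) with hB
  -- the common value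
  set h : ℤ → ℤ := fun l => (2 * (l / (m : ℤ)) + 1) * (-1) ^ l.natAbs * s l with hh
  -- division fact
  have hdiv : ∀ (k : ℤ) (l' : ℕ), l' < m → ((m : ℤ) * k + (l' : ℤ)) / m = k := by
    intro k l' hl'
    rw [add_comm, Int.add_mul_ediv_left _ _ hmz,
      Int.ediv_eq_zero_of_lt (by positivity) (by exact_mod_cast hl'), zero_add]
  refine ⟨m * (B + 1), fun N hN => ?_⟩
  -- LHS
  have hL : (∑ k ∈ (Finset.Icc (-(N : ℤ)) (N : ℤ)).filter (fun k => (m : ℤ) ∣ k), Xchi k s)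
      = ∑ l ∈ s.support, h l := by
    have hX : ∀ k : ℤ, Xchi k s = ∑ l ∈ s.support, eta k l * s l := by
      intro k
      refine finsum_eq_sum_of_support_subset _ ?_
      intro l hl
      simp only [Function.mem_support, ne_eq] at hl
      simp only [Finset.coe_sort_coe, Finsupp.fun_support_eq, Finset.mem_coe,
        Finsupp.mem_support_iff]
      intro h0; exact hl (by rw [h0, mul_zero])
    simp_rw [hX]
    rw [Finset.sum_comm]
    refine Finset.sum_congr rfl fun l hl => ?_
    rw [← Finset.sum_mul]
    have hlB : l.natAbs ≤ B := Finset.le_sup (f := fun l => l.natAbs) hl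
    have hNl : (m : ℤ) * (l.natAbs + 1) ≤ N := by
      have : m * (l.natAbs + 1) ≤ m * (B + 1) := Nat.mul_le_mul_left m (by omega)
      have h2 : m * (l.natAbs + 1) ≤ N := le_trans this hN
      exact_mod_cast h2
    rw [weight_sum m heven hm l N hNl, hh]
  rw [hL]
  -- RHS
  set K : Finset ℤ := s.support.image (fun l => l / (m : ℤ)) with hK
  have hfin : (∑ᶠ k : ℤ, (2 * k + 1) *
        ∑ l ∈ Finset.range m, (-1) ^ l * s ((m : ℤ) * k + (l : ℤ)))
      = ∑ k ∈ K, (2 * k + 1) * ∑ l ∈ Finset.range m, (-1) ^ l * s ((m : ℤ) * k + (l : ℤ)) := by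
    refine finsum_eq_sum_of_support_subset _ ?_
    intro k hk
    simp only [Function.mem_support, ne_eq] at hk
    have : ∑ l ∈ Finset.range m, (-1 : ℤ) ^ l * s ((m : ℤ) * k + (l : ℤ)) ≠ 0 := by
      intro h0; exact hk (by rw [h0, mul_zero])
    obtain ⟨l', hl'm, hl's⟩ : ∃ l' ∈ Finset.range m,
        (-1 : ℤ) ^ l' * s ((m : ℤ) * k + (l' : ℤ)) ≠ 0 := by
      by_contra hc
      push_neg at hc
      exact this (Finset.sum_eq_zero hc)
    have hsne : s ((m : ℤ) * k + (l' : ℤ)) ≠ 0 := fun h0 => hl's (by rw [h0, mul_zero])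
    simp only [Finset.coe_sort_coe, Finset.mem_coe, hK, Finset.mem_image]
    exact ⟨(m : ℤ) * k + (l' : ℤ), Finsupp.mem_support_iff.mpr hsne,
      hdiv k l' (Finset.mem_range.mp hl'm)⟩
  rw [hfin]
  -- reindex the double sum
  set e : ℤ × ℕ → ℤ := fun p => (m : ℤ) * p.1 + (p.2 : ℤ) with he
  set P : Finset (ℤ × ℕ) := K ×ˢ Finset.range m with hP
  have hinj : ∀ p ∈ P, ∀ p' ∈ P, e p = e p' → p = p' := by
    rintro ⟨k, l'⟩ hp ⟨k2, l2⟩ hp2 heq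
    simp only [hP, Finset.mem_product, Finset.mem_range] at hp hp2
    have hk : k = k2 := by
      have h1 := hdiv k l' hp.2
      have h2 := hdiv k2 l2 hp2.2
      simp only [he] at heq
      rw [← h1, ← h2, heq]
    subst hk
    have : (l' : ℤ) = l2 := by
      have := heq
      simp only [he] at this
      omega
    exact Prod.ext rfl (by exact_mod_cast this)
  have hsum2 : (∑ k ∈ K, (2 * k + 1) *
        ∑ l ∈ Finset.range m, (-1 : ℤ) ^ l * s ((m : ℤ) * k + (l : ℤ)))
      = ∑ l ∈ P.image e, h l := by
    rw [Finset.sum_image hinj]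
    rw [hP, Finset.sum_product]
    refine Finset.sum_congr rfl fun k _ => ?_
    rw [Finset.mul_sum]
    refine Finset.sum_congr rfl fun l' hl' => ?_
    have hl'm : l' < m := Finset.mem_range.mp hl'
    simp only [hh, he]
    rw [hdiv k l' hl'm]
    have hpar : (-1 : ℤ) ^ ((m : ℤ) * k + (l' : ℤ)).natAbs = (-1) ^ l' := by
      rw [negOne_pow_natAbs_congr (a := (m : ℤ) * k + (l' : ℤ)) (b := (l' : ℤ))
        (by simpa using hme.mul_right k)]
      simp
    rw [hpar]
    ring
  rw [hsum2]
  -- restrict to the support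
  refine Finset.sum_subset ?_ ?_
  · intro l hl
    have hlm : ((m : ℤ) * (l / m) + ((l % (m : ℤ)).toNat : ℤ)) = l := by
      rw [Int.toNat_of_nonneg (Int.emod_nonneg l hmz)]
      exact Int.mul_ediv_add_emod l m
    refine Finset.mem_image.mpr ⟨(l / (m : ℤ), (l % (m : ℤ)).toNat), ?_,
      (show e (l / (m : ℤ), (l % (m : ℤ)).toNat) = l by simp only [he]; exact hlm)⟩
    refine Finset.mem_product.mpr ⟨Finset.mem_image.mpr ⟨l, hl, rfl⟩, ?_⟩
    refine Finset.mem_range.mpr ?_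
    have := Int.emod_lt_of_pos l hm'
    omega
  · intro l _ hl
    have : s l = 0 := Finsupp.notMem_support_iff.mp hl
    simp [hh, this]
end

section
/- Let s : ℤ → ℤ be a finitely supported function and let k ∈ ℤ satisfy k > |i| for every i in the support of s. Then X^{-k}(s) = −X^{k}(s). Consequently, for any function c : ℤ → ℤ with c_k = c_{-k} for all k, the partial sums Σ_{|k| ≤ N} c_k · X^k(s) form an eventually constant sequence in N. -/
lemma Xchi_eq_sum (k : ℤ) (s : ℤ →₀ ℤ) :
    Xchi k s = ∑ l ∈ s.support, eta k l * s l := by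
  apply finsum_eq_finset_sum_of_support_subset
  intro l hl
  simp only [Function.mem_support, ne_eq] at hl
  simp only [Finset.coe_sort_coe, Finsupp.mem_support_iff, Finset.mem_coe]
  intro h0
  exact hl (by rw [h0, mul_zero])

lemma Xchi_anti (s : ℤ →₀ ℤ) (k : ℤ) (hk : ∀ i ∈ s.support, |i| < k) :
    Xchi (-k) s = -Xchi k s := by
  rw [Xchi_eq_sum, Xchi_eq_sum, ← Finset.sum_neg_distrib]
  refine Finset.sum_congr rfl fun i hi => ?_
  have habs := hk i hi
  rw [abs_lt] at habs
  have h1 : (-k : ℤ) ≤ i := by omega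
  have h2 : ¬ (k ≤ i) := by omega
  rw [eta, eta, if_pos h1, if_neg h2, ← neg_mul]
  congr 1
  have hsim : i - -k = i + k := by ring
  rw [hsim, pow_succ, mul_neg_one, neg_neg]
  have hpar : Even (i + k) ↔ Even (k - i) := by
    constructor
    · rintro ⟨m, hm⟩; exact ⟨m - i, by omega⟩
    · rintro ⟨m, hm⟩; exact ⟨m + i, by omega⟩
  rcases Int.even_or_odd (i + k) with h | h
  · rw [Even.neg_one_pow (Int.natAbs_even.mpr h),
      Even.neg_one_pow (Int.natAbs_even.mpr (hpar.mp h))]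
  · have h' : Odd (k - i) := by
      rcases Int.even_or_odd (k - i) with he | ho
      · exact absurd (hpar.mpr he) (Int.not_even_iff_odd.mpr h)
      · exact ho
    rw [Odd.neg_one_pow (Int.natAbs_odd.mpr h), Odd.neg_one_pow (Int.natAbs_odd.mpr h')]

/-- If `k > |i|` for every `i` in the support of the finitely
supported function `s`, then `X^{-k}(s) = -X^k(s)`; consequently, for any
symmetric weights `c` (with `c_j = c_{-j}`) the partial sums
`Σ_{|j| ≤ N} c_j · X^j(s)` are eventually constant in `N`. -/
theorem stmt_8 (s : ℤ →₀ ℤ) (k : ℤ) (hk : ∀ i ∈ s.support, |i| < k) :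
    Xchi (-k) s = -Xchi k s ∧
    ∀ c : ℤ → ℤ, (∀ j : ℤ, c j = c (-j)) →
      ∃ N₀ : ℕ, ∀ N ≥ N₀,
        (∑ j ∈ Finset.Icc (-(N : ℤ)) (N : ℤ), c j * Xchi j s) =
        ∑ j ∈ Finset.Icc (-(N₀ : ℤ)) (N₀ : ℤ), c j * Xchi j s := by
  refine ⟨Xchi_anti s k hk, fun c hc => ?_⟩
  set B : ℕ := s.support.sup (fun i => i.natAbs) with hB
  have hbound : ∀ i ∈ s.support, i.natAbs ≤ B :=
    fun i hi => Finset.le_sup (f := fun i => i.natAbs) hi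
  refine ⟨B + 1, fun N hN => ?_⟩
  induction N, hN using Nat.le_induction with
  | base => rfl
  | succ N hN ih =>
    rw [← ih]
    have hset : Finset.Icc (-((N + 1 : ℕ) : ℤ)) ((N + 1 : ℕ) : ℤ)
        = insert (-((N : ℤ) + 1)) (insert ((N : ℤ) + 1)
            (Finset.Icc (-(N : ℤ)) (N : ℤ))) := by
      ext x
      simp only [Finset.mem_Icc, Finset.mem_insert]
      push_cast
      omega
    have hm1 : -((N : ℤ) + 1) ∉ insert ((N : ℤ) + 1) (Finset.Icc (-(N : ℤ)) (N : ℤ)) := by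
      simp only [Finset.mem_insert, Finset.mem_Icc]
      omega
    have hm2 : ((N : ℤ) + 1) ∉ Finset.Icc (-(N : ℤ)) (N : ℤ) := by
      simp only [Finset.mem_Icc]; omega
    rw [hset, Finset.sum_insert hm1, Finset.sum_insert hm2]
    have hanti : Xchi (-((N : ℤ) + 1)) s = -Xchi ((N : ℤ) + 1) s := by
      apply Xchi_anti
      intro i hi
      have := hbound i hi
      have : |i| = i.natAbs := Int.abs_eq_natAbs i
      omega
    rw [hanti, ← hc ((N : ℤ) + 1)]
    ring
end

section
/- Let Z^{-∞,∞} denote the free ℤ-module of finitely supported functions ℤ → ℤ, and for i ∈ ℤ let e_i denote the indicator function of {i}. Then the set {e_0} ∪ { e_{i-1} + e_i : i ∈ ℤ } is a ℤ-basis of Z^{-∞,∞}. -/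
namespace Stmt10Aux

abbrev M := Option ℤ →₀ ℤ

/-- coordinates of `e_n` for `n ≥ 0` -/
noncomputable def p : ℕ → M
  | 0 => Finsupp.single none 1
  | n + 1 => Finsupp.single (some ((n : ℤ) + 1)) 1 - p n

/-- coordinates of `e_{-(n+1)}` -/
noncomputable def q : ℕ → M
  | 0 => Finsupp.single (some 0) 1 - Finsupp.single none 1
  | n + 1 => Finsupp.single (some (-(n : ℤ) - 1)) 1 - q n

noncomputable def c : ℤ → M
  | Int.ofNat n => p n
  | Int.negSucc n => q n

noncomputable def v : Option ℤ → (ℤ →₀ ℤ)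
  | none => Finsupp.single 0 1
  | some i => Finsupp.single (i - 1) 1 + Finsupp.single i 1

lemma c_ofNat (n : ℕ) : c (n : ℤ) = p n := rfl
lemma c_negSucc (n : ℕ) : c (-(n : ℤ) - 1) = q n := by
  have : (-(n : ℤ) - 1) = Int.negSucc n := by simp [Int.negSucc_eq]; ring
  rw [this]; rfl

lemma keyA (i : ℤ) : c (i - 1) + c i = Finsupp.single (some i) 1 := by
  rcases i with n | n
  · cases n with
    | zero =>
        have h1 : ((Int.ofNat 0) - 1 : ℤ) = -((0:ℕ) : ℤ) - 1 := by simp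
        rw [h1, c_negSucc]
        show (Finsupp.single (some 0) 1 - Finsupp.single none 1) + p 0
          = Finsupp.single (some (Int.ofNat 0)) 1
        simp [p]
    | succ m =>
        have h1 : ((Int.ofNat (m + 1)) - 1 : ℤ) = (m : ℤ) := by
          simp only [Int.ofNat_eq_coe]; push_cast; omega
        rw [h1, c_ofNat]
        show p m + c (Int.ofNat (m + 1)) = _
        show p m + p (m + 1) = _
        have : ((Int.ofNat (m + 1)) : ℤ) = (m : ℤ) + 1 := by push_cast; rfl
        rw [this]
        simp [p]

  · -- i = -(n+1)
    have h0 : (Int.negSucc n : ℤ) = -(n : ℤ) - 1 := by simp [Int.negSucc_eq]; ring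
    have h1 : (Int.negSucc n - 1 : ℤ) = -((n + 1 : ℕ) : ℤ) - 1 := by
      rw [h0]; push_cast; ring
    rw [h1, c_negSucc, h0, c_negSucc]
    show q (n + 1) + q n = _
    rw [show q (n + 1) = Finsupp.single (some (-(n : ℤ) - 1)) 1 - q n from rfl]
    abel

noncomputable def Φ : (ℤ →₀ ℤ) →ₗ[ℤ] M := Finsupp.linearCombination ℤ c
noncomputable def Ψ : M →ₗ[ℤ] (ℤ →₀ ℤ) := Finsupp.linearCombination ℤ v

lemma Ψ_p (n : ℕ) : Ψ (p n) = Finsupp.single (n : ℤ) 1 := by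
  induction n with
  | zero => simp [p, Ψ, v]
  | succ m ih =>
      rw [show p (m + 1) = Finsupp.single (some ((m : ℤ) + 1)) 1 - p m from rfl]
      rw [map_sub, ih]
      simp only [Ψ, Finsupp.linearCombination_single, one_smul, v]
      rw [show ((m : ℤ) + 1 - 1) = (m : ℤ) by ring]
      push_cast
      abel

lemma Ψ_q (n : ℕ) : Ψ (q n) = Finsupp.single (-(n : ℤ) - 1) 1 := by
  induction n with
  | zero => simp [q, Ψ, v]
  | succ m ih =>
      rw [show q (m + 1) = Finsupp.single (some (-(m : ℤ) - 1)) 1 - q m from rfl]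
      rw [map_sub, ih]
      simp only [Ψ, Finsupp.linearCombination_single, one_smul, v]
      push_cast
      rw [show (-(m : ℤ) - 1 - 1) = -((m : ℤ) + 1) - 1 by ring]
      abel

lemma Ψ_c (j : ℤ) : Ψ (c j) = Finsupp.single j 1 := by
  rcases j with n | n
  · exact Ψ_p n
  · rw [show (Int.negSucc n : ℤ) = -(n : ℤ) - 1 by simp [Int.negSucc_eq]; ring,
      c_negSucc]
    exact Ψ_q n

lemma comp1 : Φ.comp Ψ = LinearMap.id := by
  apply Finsupp.lhom_ext
  intro a b
  have : Finsupp.single a b = b • Finsupp.single a (1 : ℤ) := by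
    rw [Finsupp.smul_single, smul_eq_mul, mul_one]
  rw [this, map_smul, map_smul, LinearMap.id_apply]
  congr 1
  rcases a with _ | i
  · rw [LinearMap.comp_apply]
    have h : Ψ (Finsupp.single none 1) = Finsupp.single (0:ℤ) 1 := by
      simp only [Ψ, Finsupp.linearCombination_single, one_smul]; rfl
    rw [h]
    simp only [Φ]
    rw [Finsupp.linearCombination_single, one_smul]
    rfl
  · rw [LinearMap.comp_apply]
    simp only [Ψ, Finsupp.linearCombination_single, one_smul, v]
    rw [map_add]
    simp only [Φ, Finsupp.linearCombination_single, one_smul]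
    exact keyA i

lemma comp2 : Ψ.comp Φ = LinearMap.id := by
  apply Finsupp.lhom_ext
  intro a b
  have : Finsupp.single a b = b • Finsupp.single a (1 : ℤ) := by
    rw [Finsupp.smul_single, smul_eq_mul, mul_one]
  rw [this, map_smul, map_smul, LinearMap.id_apply]
  congr 1
  rw [LinearMap.comp_apply]
  simp only [Φ, Finsupp.linearCombination_single, one_smul]
  exact Ψ_c a

end Stmt10Aux

/-- In the free `ℤ`-module `ℤ →₀ ℤ` of finitely supported
functions `ℤ → ℤ`, the family consisting of `e₀` together with the elements
`e_{i-1} + e_i` for `i ∈ ℤ` (where `e_j` is the indicator of `{j}`) is a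
`ℤ`-basis. -/
theorem stmt_10 :
    ∃ b : Module.Basis (Option ℤ) ℤ (ℤ →₀ ℤ),
      b none = Finsupp.single 0 1 ∧
      ∀ i : ℤ, b (some i) = Finsupp.single (i - 1) 1 + Finsupp.single i 1 := by
  refine ⟨Module.Basis.ofRepr (LinearEquiv.ofLinear Stmt10Aux.Φ Stmt10Aux.Ψ
    Stmt10Aux.comp1 Stmt10Aux.comp2), ?_, ?_⟩ <;>
  · first
    | (rw [Module.Basis.coe_ofRepr]
       simp [LinearEquiv.ofLinear_symm_apply, Stmt10Aux.Ψ, Stmt10Aux.v])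
    | (intro i
       rw [Module.Basis.coe_ofRepr]
       simp [LinearEquiv.ofLinear_symm_apply, Stmt10Aux.Ψ, Stmt10Aux.v])
end

section
/- For all integers i and k, X^k(e_{i-1} + e_i) = 2 if i = k, and X^k(e_{i-1} + e_i) = 0 if i ≠ k, where e_j denotes the indicator function of {j} on ℤ. -/
/-- `X^k(e_{i-1} + e_i) = 2` if `i = k` and `= 0` otherwise,
where `e_j` is the indicator function of `{j}` on `ℤ`. -/
theorem stmt_11 (i k : ℤ) :
    Xchi k (fun l => (if l = i - 1 then (1 : ℤ) else 0) + (if l = i then 1 else 0)) =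
      if i = k then 2 else 0 := by
  have key : Xchi k (fun l => (if l = i - 1 then (1 : ℤ) else 0) + (if l = i then 1 else 0))
      = eta k (i - 1) + eta k i := by
    unfold Xchi
    have h1 : ∀ l : ℤ, eta k l * ((if l = i - 1 then (1 : ℤ) else 0) + (if l = i then 1 else 0))
        = (if l = i - 1 then eta k (i - 1) else 0) + (if l = i then eta k i else 0) := by
      intro l
      by_cases h : l = i - 1
      · subst h
        rw [if_pos rfl, if_neg (by omega), if_pos rfl, if_neg (by omega)]; ring
      · by_cases h' : l = i
        · subst h'
          rw [if_neg h, if_pos rfl, if_neg h, if_pos rfl]; ring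
        · simp [h, h']
    rw [finsum_congr h1, finsum_add_distrib]
    · rw [finsum_eq_single _ (i - 1) (by intro x hx; simp [hx]),
        finsum_eq_single _ i (by intro x hx; simp [hx])]
      simp
    · exact (Set.finite_singleton (i - 1)).subset (by
        intro x hx; by_contra hne
        simp only [Set.mem_singleton_iff] at hne
        simp [Function.mem_support, hne] at hx)
    · exact (Set.finite_singleton i).subset (by
        intro x hx; by_contra hne
        simp only [Set.mem_singleton_iff] at hne
        simp [Function.mem_support, hne] at hx)
  rw [key]
  by_cases hik : i = k
  · subst hik
    simp only [eta, if_pos]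
    rw [if_neg (by omega), if_pos le_rfl]
    have h1 : (i - (i - 1)).natAbs = 1 := by omega
    have h2 : (i - i).natAbs = 0 := by omega
    rw [h1, h2]; norm_num
  · rw [if_neg hik]
    rcases le_or_gt k (i - 1) with h | h
    · have hk : k ≤ i := by omega
      simp only [eta, if_pos h, if_pos hk]
      have h2 : (i - k).natAbs = (i - 1 - k).natAbs + 1 := by omega
      rw [h2, pow_succ]; ring
    · have h1 : ¬ k ≤ i - 1 := by omega
      have h2 : ¬ k ≤ i := by omega
      simp only [eta, if_neg h1, if_neg h2]
      have h3 : (k - (i - 1)).natAbs = (k - i).natAbs + 1 := by omega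
      rw [h3, pow_succ, pow_succ]; ring
end

section
/- Let F_q be a finite field with q elements. Then the number of ordered pairs (A,B) of 2×2 matrices over F_q such that I + A·B is invertible (equivalently, such that −1 is not an eigenvalue of A·B) equals q^2 − q^3 + 2q^5 − q^6 − q^7 + q^8. -/
open Matrix

section aux

variable {F : Type*} [Field F] [Fintype F]

local notation "Mat" => Matrix (Fin 2) (Fin 2) F

noncomputable def myUnitsEquiv (M : Type*) [Monoid M] : Mˣ ≃ {x : M // IsUnit x} where
  toFun u := ⟨u, u.isUnit⟩
  invFun x := x.2.unit
  left_inv u := Units.ext u.isUnit.unit_spec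
  right_inv x := Subtype.ext x.2.unit_spec

lemma card_mat : Fintype.card (Matrix (Fin 2) (Fin 2) F) = Fintype.card F ^ 4 := by
  calc Fintype.card (Matrix (Fin 2) (Fin 2) F) = Fintype.card (Fin 2 → Fin 2 → F) := rfl
  _ = (Fintype.card F ^ 2) ^ 2 := by simp [Fintype.card_fun]
  _ = Fintype.card F ^ 4 := by ring

lemma card_B_unit (A : Mat) (hA : IsUnit A) :
    Nat.card {B : Mat // IsUnit (1 + A * B)} = Nat.card (GL (Fin 2) F) := by
  obtain ⟨U, rfl⟩ := hA
  have e : {B : Mat // IsUnit (1 + (U : Mat) * B)} ≃ {C : Mat // IsUnit C} :=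
    { toFun := fun B => ⟨1 + (U : Mat) * B.1, B.2⟩
      invFun := fun C => ⟨(↑U⁻¹ : Mat) * (C.1 - 1), by
        have h : (1 : Mat) + (U : Mat) * ((↑U⁻¹ : Mat) * (C.1 - 1)) = C.1 := by
          rw [Units.mul_inv_cancel_left, add_comm, sub_add_cancel]
        rw [h]; exact C.2⟩
      left_inv := fun B => Subtype.ext (by
        show (↑U⁻¹ : Mat) * ((1 + (U : Mat) * B.1) - 1) = B.1
        rw [add_sub_cancel_left, Units.inv_mul_cancel_left])
      right_inv := fun C => Subtype.ext (by
        show (1 : Mat) + (U : Mat) * ((↑U⁻¹ : Mat) * (C.1 - 1)) = C.1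
        rw [Units.mul_inv_cancel_left, add_comm, sub_add_cancel]) }
  exact Nat.card_congr (e.trans (myUnitsEquiv Mat).symm)

lemma card_B_nonunit (A : Mat) (hA : ¬ IsUnit A) (hA0 : A ≠ 0) :
    Nat.card {B : Mat // IsUnit (1 + A * B)}
      = Fintype.card F ^ 4 - Fintype.card F ^ 3 := by
  classical
  have hdet : A.det = 0 := by
    by_contra h
    exact hA ((Matrix.isUnit_iff_isUnit_det A).2 (Ne.isUnit h))
  have expand : ∀ M : Mat, (1 + M).det = 1 + Matrix.trace M + M.det := by
    intro M
    simp [Matrix.det_fin_two, Matrix.trace_fin_two, Matrix.add_apply, Matrix.one_apply]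
    ring
  -- the linear map B ↦ trace (A * B)
  set L : Mat →ₗ[F] F :=
    (Matrix.traceLinearMap (Fin 2) F F).comp (LinearMap.mulLeft F A) with hL
  have hLapp : ∀ B : Mat, L B = Matrix.trace (A * B) := fun B => rfl
  have hiff : ∀ B : Mat, IsUnit (1 + A * B) ↔ L B ≠ -1 := by
    intro B
    rw [Matrix.isUnit_iff_isUnit_det, isUnit_iff_ne_zero, expand, Matrix.det_mul, hdet,
      zero_mul, add_zero, hLapp]
    constructor
    · intro h h'; exact h (by rw [h']; ring)
    · intro h h'; exact h (by linear_combination h')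
  obtain ⟨i, j, hij⟩ : ∃ i j, A i j ≠ 0 := by
    by_contra h
    push_neg at h
    exact hA0 (Matrix.ext fun i j => by simpa using h i j)
  set B₁ : Mat := (A i j)⁻¹ • Matrix.single j i 1 with hB₁def
  have hB₁ : L B₁ = 1 := by
    rw [hLapp, hB₁def, Matrix.mul_smul, Matrix.trace_smul]
    have key : Matrix.trace (A * Matrix.single j i (1 : F)) = A i j := by
      rw [Matrix.trace]
      rw [Finset.sum_eq_single i]
      · simp [Matrix.diag]
      · intro b _ hb
        simpa using Matrix.mul_single_apply_of_ne (c := (1 : F)) j i b b hb A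
      · simp
    rw [key, smul_eq_mul, inv_mul_cancel₀ hij]
  -- splitting equivalence
  have hker : ∀ c : F, ∀ K ∈ LinearMap.ker L, L (K + c • B₁) = c := by
    intro c K hK
    rw [map_add, _root_.map_smul, LinearMap.mem_ker.mp hK, hB₁, smul_eq_mul, mul_one, zero_add]
  have hmem : ∀ B : Mat, B - L B • B₁ ∈ LinearMap.ker L := by
    intro B
    rw [LinearMap.mem_ker, map_sub, _root_.map_smul, hB₁, smul_eq_mul, mul_one, sub_self]
  have e : Mat ≃ LinearMap.ker L × F :=
    { toFun := fun B => (⟨B - L B • B₁, hmem B⟩, L B)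
      invFun := fun p => p.1.1 + p.2 • B₁
      left_inv := fun B => by simp
      right_inv := fun p => by
        have h2 : L (p.1.1 + p.2 • B₁) = p.2 := hker p.2 p.1.1 p.1.2
        refine Prod.ext (Subtype.ext ?_) h2
        show p.1.1 + p.2 • B₁ - L (p.1.1 + p.2 • B₁) • B₁ = p.1.1
        rw [h2, add_sub_cancel_right] }
  have ecard : Fintype.card F ^ 4 = Nat.card (LinearMap.ker L) * Fintype.card F := by
    rw [← card_mat (F := F), ← Nat.card_eq_fintype_card,
      Nat.card_congr e, Nat.card_prod]
    simp [Nat.card_eq_fintype_card]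
  have hkercard : Nat.card (LinearMap.ker L) = Fintype.card F ^ 3 := by
    have hq : 0 < Fintype.card F := Fintype.card_pos
    have h : Fintype.card F ^ 3 * Fintype.card F
        = Nat.card (LinearMap.ker L) * Fintype.card F := by
      rw [← ecard]; ring
    exact (Nat.eq_of_mul_eq_mul_right hq h.symm)
  -- restrict the equivalence
  have e1 : {B : Mat // IsUnit (1 + A * B)} ≃ {B : Mat // L B ≠ -1} :=
    Equiv.subtypeEquivRight hiff
  have e3 : {B : Mat // L B ≠ -1} ≃ LinearMap.ker L × {c : F // c ≠ -1} :=
    { toFun := fun B => (⟨B.1 - L B.1 • B₁, hmem B.1⟩, ⟨L B.1, B.2⟩)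
      invFun := fun p => ⟨p.1.1 + p.2.1 • B₁, by
        rw [hker p.2.1 p.1.1 p.1.2]; exact p.2.2⟩
      left_inv := fun B => Subtype.ext (by simp)
      right_inv := fun p => by
        have h2 : L (p.1.1 + p.2.1 • B₁) = p.2.1 := hker p.2.1 p.1.1 p.1.2
        refine Prod.ext (Subtype.ext ?_) (Subtype.ext ?_)
        · show p.1.1 + p.2.1 • B₁ - L (p.1.1 + p.2.1 • B₁) • B₁ = p.1.1
          rw [h2, add_sub_cancel_right]
        · exact h2 }
  rw [Nat.card_congr (e1.trans e3), Nat.card_prod, hkercard]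
  have hc : Nat.card {c : F // c ≠ -1} = Fintype.card F - 1 := by
    rw [Nat.card_eq_fintype_card, Fintype.card_subtype_compl, Fintype.card_subtype_eq]
  rw [hc, Nat.mul_sub, mul_one, ← pow_succ]

noncomputable def locCount (A : Mat) : ℕ := Nat.card {B : Mat // IsUnit (1 + A * B)}

lemma locCount_zero : locCount (0 : Mat) = Fintype.card F ^ 4 := by
  have h : ∀ B : Mat, IsUnit ((1 : Mat) + 0 * B) := by intro B; simp
  rw [locCount, Nat.card_congr (Equiv.subtypeUnivEquiv h), Nat.card_eq_fintype_card, card_mat]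

end aux

/-- Over a finite field with `q` elements, the number of
ordered pairs `(A, B)` of `2×2` matrices such that `I + A·B` is invertible
(equivalently, `-1` is not an eigenvalue of `A·B`) equals
`q² − q³ + 2q⁵ − q⁶ − q⁷ + q⁸`. -/
theorem stmt_12 (F : Type*) [Field F] [Fintype F] :
    (Nat.card {p : Matrix (Fin 2) (Fin 2) F × Matrix (Fin 2) (Fin 2) F //
        IsUnit (1 + p.1 * p.2)} : ℤ) =
      (Fintype.card F : ℤ) ^ 2 - (Fintype.card F : ℤ) ^ 3 + 2 * (Fintype.card F : ℤ) ^ 5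
        - (Fintype.card F : ℤ) ^ 6 - (Fintype.card F : ℤ) ^ 7 + (Fintype.card F : ℤ) ^ 8 := by
  classical
  set q := Fintype.card F with hqdef
  have hq1 : 1 ≤ q := Fintype.card_pos
  set Mt := Matrix (Fin 2) (Fin 2) F with hMt
  set nGL := Nat.card (GL (Fin 2) F) with hnGLdef
  have hGLnat : nGL = (q ^ 2 - 1) * (q ^ 2 - q) := by
    rw [hnGLdef, Matrix.card_GL_field, Fin.prod_univ_two]
    simp [hqdef]
  -- step 1 : fiber over the first matrix
  have step1 : Nat.card {p : Mt × Mt // IsUnit (1 + p.1 * p.2)} = ∑ A : Mt, locCount A := by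
    rw [Nat.card_eq_fintype_card,
      Fintype.card_congr (Equiv.subtypeProdEquivSigmaSubtype
        fun (A B : Mt) => IsUnit (1 + A * B)),
      Fintype.card_sigma]
    exact Finset.sum_congr rfl fun A _ => (Nat.card_eq_fintype_card).symm
  have hsum := Finset.sum_filter_add_sum_filter_not Finset.univ
    (fun A : Mt => IsUnit A) locCount
  have hA1 : ∑ A ∈ Finset.univ.filter (fun A : Mt => IsUnit A), locCount A
      = (Finset.univ.filter (fun A : Mt => IsUnit A)).card * nGL := by
    have hcongr : ∀ A ∈ Finset.univ.filter (fun A : Mt => IsUnit A), locCount A = nGL :=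
      fun A hA => card_B_unit A (Finset.mem_filter.mp hA).2
    rw [Finset.sum_congr rfl hcongr, Finset.sum_const, smul_eq_mul]
  have hsplit2 := Finset.sum_filter_add_sum_filter_not
      (Finset.univ.filter (fun A : Mt => ¬ IsUnit A)) (fun A => A = 0) locCount
  have h0notunit : ¬ IsUnit (0 : Mt) := by simp [isUnit_zero_iff]
  have hfilter0 : (Finset.univ.filter (fun A : Mt => ¬ IsUnit A)).filter (fun A => A = 0)
      = {0} := by
    ext A
    simp only [Finset.mem_filter, Finset.mem_univ, true_and, Finset.mem_singleton]
    constructor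
    · rintro ⟨-, h⟩; exact h
    · rintro rfl; exact ⟨h0notunit, rfl⟩
  have hA2 : ∑ A ∈ (Finset.univ.filter (fun A : Mt => ¬ IsUnit A)).filter (fun A => ¬ A = 0),
        locCount A
      = ((Finset.univ.filter (fun A : Mt => ¬ IsUnit A)).filter (fun A => ¬ A = 0)).card
        * (q ^ 4 - q ^ 3) := by
    have hcongr : ∀ A ∈ (Finset.univ.filter (fun A : Mt => ¬ IsUnit A)).filter
        (fun A => ¬ A = 0), locCount A = q ^ 4 - q ^ 3 := by
      intro A hA
      obtain ⟨hA', h0⟩ := Finset.mem_filter.mp hA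
      exact card_B_nonunit A (Finset.mem_filter.mp hA').2 h0
    rw [Finset.sum_congr rfl hcongr, Finset.sum_const, smul_eq_mul]
  -- cardinalities of the pieces
  have hcardU : (Finset.univ.filter (fun A : Mt => IsUnit A)).card = nGL := by
    have h : nGL = Fintype.card {A : Mt // IsUnit A} := by
      rw [hnGLdef, Nat.card_congr (myUnitsEquiv Mt), Nat.card_eq_fintype_card]
    rw [h, Fintype.card_subtype]
  have hcard1 : (Finset.univ.filter (fun A : Mt => IsUnit A)).card
      + (Finset.univ.filter (fun A : Mt => ¬ IsUnit A)).card = q ^ 4 := by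
    rw [Finset.card_filter_add_card_filter_not, Finset.card_univ, card_mat]
  have hcard2 : 1 + ((Finset.univ.filter (fun A : Mt => ¬ IsUnit A)).filter
        (fun A => ¬ A = 0)).card
      = (Finset.univ.filter (fun A : Mt => ¬ IsUnit A)).card := by
    rw [← Finset.card_filter_add_card_filter_not
      (s := Finset.univ.filter (fun A : Mt => ¬ IsUnit A)) (p := fun A => A = 0),
      hfilter0, Finset.card_singleton]
  -- total in ℕ
  have total : Nat.card {p : Mt × Mt // IsUnit (1 + p.1 * p.2)}
      = nGL * nGL + (q ^ 4 + ((Finset.univ.filter (fun A : Mt => ¬ IsUnit A)).filter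
          (fun A => ¬ A = 0)).card * (q ^ 4 - q ^ 3)) := by
    rw [step1, ← hsum, hA1, hcardU, ← hsplit2, hfilter0, Finset.sum_singleton, locCount_zero,
      hA2]
  -- pass to ℤ
  set n1 := ((Finset.univ.filter (fun A : Mt => ¬ IsUnit A)).filter (fun A => ¬ A = 0)).card
    with hn1
  have h1q2 : 1 ≤ q ^ 2 := Nat.one_le_pow _ _ hq1
  have hqq2 : q ≤ q ^ 2 := by nlinarith
  have hq34 : q ^ 3 ≤ q ^ 4 := Nat.pow_le_pow_right hq1 (by norm_num)
  have hGLZ : (nGL : ℤ) = ((q : ℤ) ^ 2 - 1) * ((q : ℤ) ^ 2 - (q : ℤ)) := by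
    rw [hGLnat]
    push_cast [Nat.cast_sub h1q2, Nat.cast_sub hqq2]
    ring
  have hn1Z : (n1 : ℤ) = (q : ℤ) ^ 4 - 1 - (nGL : ℤ) := by
    have h := hcard1
    rw [hcardU, ← hcard2] at h
    have : (nGL : ℤ) + (1 + (n1 : ℤ)) = (q : ℤ) ^ 4 := by exact_mod_cast congrArg (Nat.cast) h
    linarith
  have totalZ : (Nat.card {p : Mt × Mt // IsUnit (1 + p.1 * p.2)} : ℤ)
      = (nGL : ℤ) * nGL + ((q : ℤ) ^ 4 + (n1 : ℤ) * ((q : ℤ) ^ 4 - (q : ℤ) ^ 3)) := by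
    rw [total]
    push_cast [Nat.cast_sub hq34]
    ring
  rw [totalZ, hn1Z, hGLZ]
  ring
end

section
/- Let F_q be a finite field with q elements. Then the number of matrices C ∈ GL₂(F_q) such that −1 is not an eigenvalue of C (equivalently, C + I is invertible) equals (q²−1)(q²−q) − (q+1)(q²−q−1) − 1. -/
open Finset

section helpers
variable {F : Type*} [Field F] [Fintype F] [DecidableEq F]

lemma countMulZero :
    ((univ : Finset (F × F)).filter fun p => p.1 * p.2 = 0).card
      = 2 * Fintype.card F - 1 := by
  have h : ((univ : Finset (F × F)).filter fun p => p.1 * p.2 = 0)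
      = ({0} ×ˢ univ) ∪ (univ ×ˢ {0}) := by
    ext p
    rw [Finset.mem_union, Finset.mem_product, Finset.mem_product]
    simp [mul_eq_zero]
  have h2 : (({0} ×ˢ univ : Finset (F × F)) ∩ (univ ×ˢ {0}))
      = ({0} : Finset F) ×ˢ ({0} : Finset F) := by
    ext p
    rw [Finset.mem_inter, Finset.mem_product, Finset.mem_product, Finset.mem_product]
    simp
  have h3 := Finset.card_union_add_card_inter ({0} ×ˢ univ : Finset (F × F)) (univ ×ˢ {0})
  rw [h2] at h3
  simp only [Finset.card_product, Finset.card_singleton, Finset.card_univ, one_mul,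
    mul_one] at h3
  rw [h]
  omega

lemma countMulEq (t : F) (ht : t ≠ 0) :
    ((univ : Finset (F × F)).filter fun p => p.1 * p.2 = t).card
      = Fintype.card F - 1 := by
  have h : ((univ : Finset (F × F)).filter fun p => p.1 * p.2 = t).card
      = ((univ : Finset F).filter fun x => x ≠ 0).card := by
    apply Finset.card_bij (fun p _ => p.1)
    · rintro ⟨x, y⟩ hp
      simp only [mem_filter, mem_univ, true_and] at hp ⊢
      rintro rfl; rw [zero_mul] at hp; exact ht hp.symm
    · rintro ⟨x, y⟩ hp ⟨x', y'⟩ hp' (h : x = x')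
      simp only [mem_filter, mem_univ, true_and] at hp hp'
      subst h
      have hx : x ≠ 0 := by rintro rfl; rw [zero_mul] at hp; exact ht hp.symm
      have hy : y = y' := mul_left_cancel₀ hx (hp.trans hp'.symm)
      rw [hy]
    · intro x hx
      simp only [mem_filter, mem_univ, true_and] at hx
      exact ⟨(x, x⁻¹ * t), by simp [mul_inv_cancel_left₀ hx], rfl⟩
  rw [h, Finset.filter_ne', Finset.card_erase_of_mem (mem_univ 0), Finset.card_univ]

lemma countAddEq :
    ((univ : Finset (F × F)).filter fun p => p.1 + p.2 = 1).card = Fintype.card F := by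
  rw [← Finset.card_univ (α := F)]
  apply Finset.card_bij (fun p _ => p.1)
  · intros; exact mem_univ _
  · rintro ⟨x, y⟩ hp ⟨x', y'⟩ hp' (h : x = x')
    simp only [mem_filter, mem_univ, true_and] at hp hp'
    subst h
    have : y = y' := by linear_combination hp - hp'
    rw [this]
  · intro x _
    exact ⟨(x, 1 - x), by simp, rfl⟩

lemma countMulZeroAddEq :
    ((univ : Finset (F × F)).filter fun p => p.1 * p.2 = 0 ∧ p.1 + p.2 = 1).card = 2 := by
  have h : ((univ : Finset (F × F)).filter fun p => p.1 * p.2 = 0 ∧ p.1 + p.2 = 1)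
      = {((0 : F), (1 : F)), ((1 : F), (0 : F))} := by
    ext ⟨x, y⟩
    simp only [mem_filter, mem_univ, true_and, mem_insert, mem_singleton, Prod.mk.injEq,
      mul_eq_zero]
    constructor
    · rintro ⟨h1 | h1, h2⟩
      · subst h1; left
        refine ⟨rfl, ?_⟩
        first | linear_combination h2 | linear_combination -h2
      · subst h1; right
        refine ⟨?_, rfl⟩
        first | linear_combination h2 | linear_combination -h2
    · rintro (⟨rfl, rfl⟩ | ⟨rfl, rfl⟩) <;> simp
  rw [h]
  rw [Finset.card_insert_of_notMem (by simp), Finset.card_singleton]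

lemma sumFibers (Q : (F × F) → (F × F) → Prop) [∀ a b, Decidable (Q a b)] :
    ((univ : Finset ((F × F) × (F × F))).filter fun p => Q p.1 p.2).card
      = ∑ a : F × F, ((univ : Finset (F × F)).filter fun b => Q a b).card := by
  rw [← Fintype.card_subtype]
  rw [Fintype.card_congr (Equiv.subtypeProdEquivSigmaSubtype Q), Fintype.card_sigma]
  simp [Fintype.card_subtype]

lemma shiftCard (P : F × F → Prop) [DecidablePred P] :
    ((univ : Finset (F × F)).filter fun a => P (a.1 + 1, a.2 + 1)).card
      = ((univ : Finset (F × F)).filter P).card := by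
  apply Finset.card_bij' (fun a _ => (a.1 + 1, a.2 + 1)) (fun b _ => (b.1 - 1, b.2 - 1))
  · intro a _; simp
  · intro b _; simp
  · intro a ha
    simp only [mem_filter, mem_univ, true_and] at ha ⊢
    exact ha
  · intro b hb
    simp only [mem_filter, mem_univ, true_and] at hb ⊢
    simpa using hb

lemma shiftCard2 (P Q : F × F → Prop) [DecidablePred P] [DecidablePred Q]
    (h : ∀ a : F × F, Q a ↔ P (a.1 + 1, a.2 + 1)) :
    ((univ : Finset (F × F)).filter Q).card = ((univ : Finset (F × F)).filter P).card := by
  apply Finset.card_bij' (fun a _ => (a.1 + 1, a.2 + 1)) (fun b _ => (b.1 - 1, b.2 - 1))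
  · intro a _; simp
  · intro b _; simp
  · intro a ha
    simp only [mem_filter, mem_univ, true_and] at ha ⊢
    exact (h a).1 ha
  · intro b hb
    simp only [mem_filter, mem_univ, true_and] at hb ⊢
    rw [h]
    simpa using hb

lemma countA1 :
    ((univ : Finset (F × F)).filter fun x => x.1 * x.2 = 0 ∧ ¬(x.1 + x.2 = 1)).card
      = 2 * Fintype.card F - 3 := by
  have hsplit := Finset.card_filter_add_card_filter_not
    (s := (univ : Finset (F × F)).filter fun x => x.1 * x.2 = 0)
    (p := fun x => x.1 + x.2 = 1)
  rw [Finset.filter_filter, Finset.filter_filter, countMulZero, countMulZeroAddEq] at hsplit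
  have hq : 2 ≤ Fintype.card F := Fintype.one_lt_card
  omega

lemma countNS :
    ((univ : Finset (F × F)).filter fun x => ¬(x.1 + x.2 = 1)).card
      = Fintype.card F * Fintype.card F - Fintype.card F := by
  have hsplit := Finset.card_filter_add_card_filter_not
    (s := (univ : Finset (F × F))) (p := fun x => x.1 + x.2 = 1)
  rw [countAddEq, Finset.card_univ, Fintype.card_prod] at hsplit
  omega

lemma countA2 :
    ((univ : Finset (F × F)).filter fun x => ¬(x.1 * x.2 = 0) ∧ ¬(x.1 + x.2 = 1)).card
      = Fintype.card F * Fintype.card F + 3 - 3 * Fintype.card F := by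
  have hsplit := Finset.card_filter_add_card_filter_not
    (s := (univ : Finset (F × F)).filter fun x => ¬(x.1 + x.2 = 1))
    (p := fun x => x.1 * x.2 = 0)
  rw [Finset.filter_filter, Finset.filter_filter, countNS] at hsplit
  have h1 : ((univ : Finset (F × F)).filter fun x => ¬(x.1 + x.2 = 1) ∧ x.1 * x.2 = 0)
      = (univ : Finset (F × F)).filter fun x => x.1 * x.2 = 0 ∧ ¬(x.1 + x.2 = 1) := by
    apply Finset.filter_congr; intro x _; exact and_comm
  have h2 : ((univ : Finset (F × F)).filter fun x => ¬(x.1 + x.2 = 1) ∧ ¬(x.1 * x.2 = 0))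
      = (univ : Finset (F × F)).filter fun x => ¬(x.1 * x.2 = 0) ∧ ¬(x.1 + x.2 = 1) := by
    apply Finset.filter_congr; intro x _; exact and_comm
  rw [h1, h2, countA1] at hsplit
  have hq : 2 ≤ Fintype.card F := Fintype.one_lt_card
  have hqq : 2 * Fintype.card F ≤ Fintype.card F * Fintype.card F :=
    Nat.mul_le_mul_right _ hq
  generalize Fintype.card F * Fintype.card F = k at *
  omega

lemma innerCard (t : F) :
    (((univ : Finset (F × F)).filter fun b => b.1 * b.2 = t).card : ℤ)
      = if t = 0 then 2 * (Fintype.card F : ℤ) - 1 else (Fintype.card F : ℤ) - 1 := by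
  have hq : 2 ≤ Fintype.card F := Fintype.one_lt_card
  split_ifs with h
  · subst h
    rw [countMulZero, Nat.cast_sub (by omega)]
    push_cast; ring
  · rw [countMulEq t h, Nat.cast_sub (by omega)]
    push_cast; ring

def quadEquiv (F : Type*) [Field F] : ((F × F) × (F × F)) ≃ Matrix (Fin 2) (Fin 2) F where
  toFun p := !![p.1.1, p.2.1; p.2.2, p.1.2]
  invFun C := ((C 0 0, C 1 1), (C 0 1, C 1 0))
  left_inv p := by
    obtain ⟨⟨a, d⟩, ⟨b, c⟩⟩ := p
    simp
  right_inv C := (Matrix.eta_fin_two C).symm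

omit [Fintype F] [DecidableEq F] in
lemma quadEquiv_cond (p : (F × F) × (F × F)) :
    (IsUnit (quadEquiv F p) ∧ IsUnit (quadEquiv F p + 1)) ↔
      (¬(p.1.1 * p.1.2 - p.2.1 * p.2.2 = 0) ∧
        ¬((p.1.1 + 1) * (p.1.2 + 1) - p.2.1 * p.2.2 = 0)) := by
  obtain ⟨⟨a, d⟩, ⟨b, c⟩⟩ := p
  rw [Matrix.isUnit_iff_isUnit_det, Matrix.isUnit_iff_isUnit_det, isUnit_iff_ne_zero,
    isUnit_iff_ne_zero]
  have h1 : (quadEquiv F ((a, d), (b, c))).det = a * d - b * c := by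
    show (!![a, b; c, d]).det = _
    rw [Matrix.det_fin_two_of]
  have h2 : (quadEquiv F ((a, d), (b, c)) + 1).det = (a + 1) * (d + 1) - b * c := by
    show (!![a, b; c, d] + 1).det = _
    rw [Matrix.one_fin_two]
    norm_num [Matrix.det_fin_two_of]
  rw [h1, h2]

end helpers

set_option maxHeartbeats 1000000 in
/-- Over a finite field with `q` elements, the number of
invertible `2×2` matrices `C` such that `-1` is not an eigenvalue of `C`
(equivalently, `C + I` is invertible) equals
`(q²−1)(q²−q) − (q+1)(q²−q−1) − 1`. -/
theorem stmt_13 (F : Type*) [Field F] [Fintype F] :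
    (Nat.card {C : Matrix (Fin 2) (Fin 2) F // IsUnit C ∧ IsUnit (C + 1)} : ℤ) =
      ((Fintype.card F : ℤ) ^ 2 - 1) * ((Fintype.card F : ℤ) ^ 2 - (Fintype.card F : ℤ))
        - ((Fintype.card F : ℤ) + 1) * ((Fintype.card F : ℤ) ^ 2 - (Fintype.card F : ℤ) - 1)
        - 1 := by
  letI : DecidableEq F := Classical.decEq F
  have hq : 2 ≤ Fintype.card F := Fintype.one_lt_card
  set q : ℤ := (Fintype.card F : ℤ) with hqdef
  -- Step 1: transfer to quadruples
  have step1 : Nat.card {C : Matrix (Fin 2) (Fin 2) F // IsUnit C ∧ IsUnit (C + 1)}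
      = ((univ : Finset ((F × F) × (F × F))).filter fun p =>
          ¬(p.1.1 * p.1.2 - p.2.1 * p.2.2 = 0) ∧
            ¬((p.1.1 + 1) * (p.1.2 + 1) - p.2.1 * p.2.2 = 0)).card := by
    rw [Nat.card_congr (Equiv.subtypeEquiv (quadEquiv F)
      (fun p => (quadEquiv_cond p).symm)).symm]
    rw [Nat.card_eq_fintype_card, Fintype.card_subtype]
  -- partition
  have hneg : ((univ : Finset ((F × F) × (F × F))).filter fun p =>
        ¬(¬(p.1.1 * p.1.2 - p.2.1 * p.2.2 = 0) ∧
          ¬((p.1.1 + 1) * (p.1.2 + 1) - p.2.1 * p.2.2 = 0)))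
      = ((univ : Finset ((F × F) × (F × F))).filter fun p =>
          p.1.1 * p.1.2 - p.2.1 * p.2.2 = 0)
        ∪ ((univ : Finset ((F × F) × (F × F))).filter fun p =>
            (p.1.1 + 1) * (p.1.2 + 1) - p.2.1 * p.2.2 = 0
              ∧ ¬(p.1.1 * p.1.2 - p.2.1 * p.2.2 = 0)) := by
    rw [← Finset.filter_or]
    apply Finset.filter_congr
    intro p _
    tauto
  have hdisj : Disjoint
      ((univ : Finset ((F × F) × (F × F))).filter fun p =>
        p.1.1 * p.1.2 - p.2.1 * p.2.2 = 0)
      ((univ : Finset ((F × F) × (F × F))).filter fun p =>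
        (p.1.1 + 1) * (p.1.2 + 1) - p.2.1 * p.2.2 = 0
          ∧ ¬(p.1.1 * p.1.2 - p.2.1 * p.2.2 = 0)) := by
    rw [Finset.disjoint_left]
    intro p hp hp'
    simp only [mem_filter, mem_univ, true_and] at hp hp'
    exact hp'.2 hp
  have hTot := Finset.card_filter_add_card_filter_not
    (s := (univ : Finset ((F × F) × (F × F))))
    (p := fun p => ¬(p.1.1 * p.1.2 - p.2.1 * p.2.2 = 0) ∧
      ¬((p.1.1 + 1) * (p.1.2 + 1) - p.2.1 * p.2.2 = 0))
  rw [hneg, Finset.card_union_of_disjoint hdisj, Finset.card_univ, Fintype.card_prod,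
    Fintype.card_prod] at hTot
  -- count A (det C = 0)
  have hA0 : ((univ : Finset ((F × F) × (F × F))).filter fun p =>
        p.1.1 * p.1.2 - p.2.1 * p.2.2 = 0).card
      = ∑ a : F × F, ((univ : Finset (F × F)).filter fun b =>
          a.1 * a.2 - b.1 * b.2 = 0).card :=
    sumFibers (F := F) (fun a b => a.1 * a.2 - b.1 * b.2 = 0)
  have hAfib : ∀ a : F × F, (((univ : Finset (F × F)).filter fun b =>
        a.1 * a.2 - b.1 * b.2 = 0).card : ℤ)
      = if a.1 * a.2 = 0 then 2 * q - 1 else q - 1 := by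
    intro a
    have he : ((univ : Finset (F × F)).filter fun b => a.1 * a.2 - b.1 * b.2 = 0)
        = (univ : Finset (F × F)).filter fun b => b.1 * b.2 = a.1 * a.2 := by
      apply Finset.filter_congr
      intro b _
      constructor
      · intro h; linear_combination -h
      · intro h; linear_combination -h
    rw [he, innerCard]
  have hA : (((univ : Finset ((F × F) × (F × F))).filter fun p =>
        p.1.1 * p.1.2 - p.2.1 * p.2.2 = 0).card : ℤ)
      = (2 * q - 1) * (2 * q - 1) + (q * q - (2 * q - 1)) * (q - 1) := by
    rw [hA0]
    push_cast
    rw [Finset.sum_congr rfl (fun a _ => hAfib a), Finset.sum_ite, Finset.sum_const,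
      Finset.sum_const]
    have hcEq : (((univ : Finset (F × F)).filter fun a => a.1 * a.2 = 0).card : ℤ)
        = 2 * q - 1 := by
      rw [countMulZero, Nat.cast_sub (by omega)]; push_cast; ring
    have hsplit := Finset.card_filter_add_card_filter_not
      (s := (univ : Finset (F × F))) (p := fun a : F × F => a.1 * a.2 = 0)
    rw [Finset.card_univ, Fintype.card_prod] at hsplit
    have hcNe : (((univ : Finset (F × F)).filter fun a => ¬(a.1 * a.2 = 0)).card : ℤ)
        = q * q - (2 * q - 1) := by
      have := congrArg (Nat.cast (R := ℤ)) hsplit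
      push_cast at this
      linarith [hcEq, this]
    simp only [nsmul_eq_mul]
    rw [hcEq, hcNe]
  -- count B (det (C+1) = 0, det C ≠ 0)
  have hB0 : ((univ : Finset ((F × F) × (F × F))).filter fun p =>
        (p.1.1 + 1) * (p.1.2 + 1) - p.2.1 * p.2.2 = 0
          ∧ ¬(p.1.1 * p.1.2 - p.2.1 * p.2.2 = 0)).card
      = ∑ a : F × F, ((univ : Finset (F × F)).filter fun b =>
          (a.1 + 1) * (a.2 + 1) - b.1 * b.2 = 0 ∧ ¬(a.1 * a.2 - b.1 * b.2 = 0)).card :=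
    sumFibers (F := F) (fun a b => (a.1 + 1) * (a.2 + 1) - b.1 * b.2 = 0
      ∧ ¬(a.1 * a.2 - b.1 * b.2 = 0))
  have hBfib : ∀ a : F × F, (((univ : Finset (F × F)).filter fun b =>
        (a.1 + 1) * (a.2 + 1) - b.1 * b.2 = 0 ∧ ¬(a.1 * a.2 - b.1 * b.2 = 0)).card : ℤ)
      = if a.1 + a.2 + 1 = 0 then 0
          else if (a.1 + 1) * (a.2 + 1) = 0 then 2 * q - 1 else q - 1 := by
    intro a
    split_ifs with h0 h1
    · have he : ((univ : Finset (F × F)).filter fun b =>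
          (a.1 + 1) * (a.2 + 1) - b.1 * b.2 = 0 ∧ ¬(a.1 * a.2 - b.1 * b.2 = 0)) = ∅ := by
        rw [Finset.filter_eq_empty_iff]
        rintro b - ⟨hb1, hb2⟩
        exact hb2 (by linear_combination hb1 - h0)
      rw [he]; simp
    · have he : ((univ : Finset (F × F)).filter fun b =>
          (a.1 + 1) * (a.2 + 1) - b.1 * b.2 = 0 ∧ ¬(a.1 * a.2 - b.1 * b.2 = 0))
          = (univ : Finset (F × F)).filter fun b => b.1 * b.2 = (a.1 + 1) * (a.2 + 1) := by
        apply Finset.filter_congr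
        intro b _
        constructor
        · rintro ⟨hb1, -⟩; linear_combination -hb1
        · intro hb1
          refine ⟨by linear_combination -hb1, fun hb2 => h0 (by linear_combination -hb1 - hb2)⟩
      rw [he, innerCard, if_pos h1]
    · have he : ((univ : Finset (F × F)).filter fun b =>
          (a.1 + 1) * (a.2 + 1) - b.1 * b.2 = 0 ∧ ¬(a.1 * a.2 - b.1 * b.2 = 0))
          = (univ : Finset (F × F)).filter fun b => b.1 * b.2 = (a.1 + 1) * (a.2 + 1) := by
        apply Finset.filter_congr
        intro b _
        constructor
        · rintro ⟨hb1, -⟩; linear_combination -hb1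
        · intro hb1
          refine ⟨by linear_combination -hb1, fun hb2 => h0 (by linear_combination -hb1 - hb2)⟩
      rw [he, innerCard, if_neg h1]
  -- counts of outer fibers for B
  have hshift1 : (((univ : Finset (F × F)).filter fun a =>
        ¬(a.1 + a.2 + 1 = 0) ∧ (a.1 + 1) * (a.2 + 1) = 0).card : ℤ) = 2 * q - 3 := by
    rw [shiftCard2 (fun x : F × F => x.1 * x.2 = 0 ∧ ¬(x.1 + x.2 = 1))
        (fun a : F × F => ¬(a.1 + a.2 + 1 = 0) ∧ (a.1 + 1) * (a.2 + 1) = 0)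
        (by
          intro a
          constructor
          · rintro ⟨h1, h2⟩
            exact ⟨h2, fun h => h1 (by linear_combination h)⟩
          · rintro ⟨h1, h2⟩
            exact ⟨fun h => h2 (by linear_combination h), h1⟩),
      countA1, Nat.cast_sub (by omega)]
    push_cast; ring
  have hshift2 : (((univ : Finset (F × F)).filter fun a =>
        ¬(a.1 + a.2 + 1 = 0) ∧ ¬((a.1 + 1) * (a.2 + 1) = 0)).card : ℤ)
      = q * q + 3 - 3 * q := by
    have h3q : 3 * Fintype.card F ≤ Fintype.card F * Fintype.card F + 3 := by nlinarith
    rw [shiftCard2 (fun x : F × F => ¬(x.1 * x.2 = 0) ∧ ¬(x.1 + x.2 = 1))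
        (fun a : F × F => ¬(a.1 + a.2 + 1 = 0) ∧ ¬((a.1 + 1) * (a.2 + 1) = 0))
        (by
          intro a
          constructor
          · rintro ⟨h1, h2⟩
            exact ⟨h2, fun h => h1 (by linear_combination h)⟩
          · rintro ⟨h1, h2⟩
            exact ⟨fun h => h2 (by linear_combination h), h1⟩),
      countA2, Nat.cast_sub h3q]
    push_cast; ring
  have hB : (((univ : Finset ((F × F) × (F × F))).filter fun p =>
        (p.1.1 + 1) * (p.1.2 + 1) - p.2.1 * p.2.2 = 0
          ∧ ¬(p.1.1 * p.1.2 - p.2.1 * p.2.2 = 0)).card : ℤ)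
      = (2 * q - 3) * (2 * q - 1) + (q * q + 3 - 3 * q) * (q - 1) := by
    rw [hB0]
    push_cast
    rw [Finset.sum_congr rfl (fun a _ => hBfib a), Finset.sum_ite, Finset.sum_const,
      Finset.sum_ite, Finset.sum_const, Finset.sum_const,
      Finset.filter_filter, Finset.filter_filter]
    simp only [nsmul_eq_mul, smul_zero, mul_zero, zero_add]
    rw [hshift1, hshift2]
  -- assemble
  rw [step1]
  have hTotZ := congrArg (Nat.cast (R := ℤ)) hTot
  push_cast at hTotZ
  rw [hA, hB] at hTotZ
  linear_combination hTotZ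
end

section
/- Let F_q be a finite field with q elements. Then the number of 2×2 matrices C over F_q of rank 1 such that −1 is not an eigenvalue of C (equivalently, C + I is invertible) equals (q²−q−1)(q+1). -/
set_option linter.unusedSectionVars false

lemma aux_rank_one_iff {F : Type*} [Field F] (C : Matrix (Fin 2) (Fin 2) F) :
    C.rank = 1 ↔ C ≠ 0 ∧ C.det = 0 := by
  constructor
  · intro h
    refine ⟨?_, ?_⟩
    · rintro rfl
      rw [Matrix.rank_zero] at h
      exact one_ne_zero h.symm
    · by_contra hd
      have hu : IsUnit C := (Matrix.isUnit_iff_isUnit_det C).mpr (isUnit_iff_ne_zero.mpr hd)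
      have h2 := Matrix.rank_of_isUnit C hu
      rw [h] at h2
      simp at h2
  · rintro ⟨h0, hd⟩
    have hle : C.rank ≤ 2 := by simpa using C.rank_le_card_width
    have hne0 : C.rank ≠ 0 := by
      intro hr
      apply h0
      have hbot : LinearMap.range C.mulVecLin = ⊥ := Submodule.finrank_eq_zero.mp hr
      have hz : C.mulVecLin = 0 := LinearMap.range_eq_bot.mp hbot
      ext i j
      have := congrFun (congrArg (fun f => f (Pi.single j 1)) (congrArg DFunLike.coe hz)) i
      simpa [Matrix.mulVecLin_apply, Matrix.mulVec_single] using this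
    have hne2 : C.rank ≠ 2 := by
      intro hr
      have htop : LinearMap.range C.mulVecLin = ⊤ := by
        apply Submodule.eq_top_of_finrank_eq
        rw [show Module.finrank F ↥(LinearMap.range C.mulVecLin) = C.rank from rfl, hr]
        simp [Module.finrank_pi]
      have hsurj : Function.Surjective C.mulVec := by
        intro v
        obtain ⟨w, hw⟩ := LinearMap.range_eq_top.mp htop v
        exact ⟨w, hw⟩
      have hu : IsUnit C := Matrix.mulVec_surjective_iff_isUnit.mp hsurj
      exact ((Matrix.isUnit_iff_isUnit_det C).mp hu).ne_zero hd
    omega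

section Cnt

variable {F : Type*} [Field F] [Fintype F] [DecidableEq F]

local notation "q" => (Fintype.card F : ℤ)

lemma aux_sum_eq (c : F) (v : ℤ) : (∑ a : F, if a = c then v else 0) = v := by
  rw [Finset.sum_ite_eq' Finset.univ c (fun _ => v)]
  simp

lemma aux_sum_ne (c : F) : (∑ a : F, if a = c then (0:ℤ) else 1) = q - 1 := by
  have : ∀ a : F, (if a = c then (0:ℤ) else 1) = 1 - (if a = c then (1:ℤ) else 0) := by
    intro a; by_cases ha : a = c <;> simp [ha]
  simp_rw [this]
  rw [Finset.sum_sub_distrib, Finset.sum_const, aux_sum_eq]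
  simp

lemma aux_fib (s : F) :
    (∑ r : F × F, if r.1 * r.2 = s then (1:ℤ) else 0)
      = if s = 0 then 2*q - 1 else q - 1 := by
  rw [Fintype.sum_prod_type]
  have inner : ∀ b : F, (∑ c : F, if b * c = s then (1:ℤ) else 0)
      = if b = 0 then (if s = 0 then (q:ℤ) else 0) else 1 := by
    intro b
    by_cases hb : b = 0
    · subst hb
      by_cases hs : s = 0
      · subst hs; simp
      · simp [eq_comm (a := (0:F)) (b := s), hs]
    · rw [if_neg hb]
      have : ∀ c : F, (b * c = s) ↔ (c = b⁻¹ * s) := by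
        intro c
        rw [inv_mul_eq_div, eq_div_iff hb, mul_comm]
      simp_rw [this]
      rw [aux_sum_eq]
  simp only [inner]
  have split : ∀ b : F, (if b = 0 then (if s = 0 then (q:ℤ) else 0) else 1)
      = 1 + (if b = 0 then (if s = 0 then (q:ℤ) else 0) - 1 else 0) := by
    intro b; by_cases hb : b = 0 <;> simp [hb]
  simp only [split]
  rw [Finset.sum_add_distrib, Finset.sum_const, aux_sum_eq]
  by_cases hs : s = 0 <;> simp [hs] <;> ring

lemma aux_trace :
    (∑ p : F × F, if p.1 + p.2 + 1 = 0 then (0:ℤ) else 1) = q^2 - q := by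
  rw [Fintype.sum_prod_type]
  have inner : ∀ a : F, (∑ d : F, if a + d + 1 = 0 then (0:ℤ) else 1) = q - 1 := by
    intro a
    have : ∀ d : F, (a + d + 1 = 0) ↔ (d = -(a+1)) := by
      intro d
      constructor <;> intro h <;> linear_combination h
    simp_rw [this]
    exact aux_sum_ne _
  simp only [inner]
  rw [Finset.sum_const]
  simp; ring

lemma aux_B :
    (∑ p : F × F, if p.1 + p.2 + 1 ≠ 0 ∧ p.1 * p.2 = 0 then (1:ℤ) else 0) = 2*q - 3 := by
  rw [Fintype.sum_prod_type]
  have inner : ∀ a : F, (∑ d : F, if a + d + 1 ≠ 0 ∧ a * d = 0 then (1:ℤ) else 0)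
      = if a = 0 then q - 1 else if a = -1 then 0 else 1 := by
    intro a
    by_cases ha : a = 0
    · subst ha
      rw [if_pos rfl]
      have : ∀ d : F, ((0:F) + d + 1 ≠ 0 ∧ (0:F) * d = 0) ↔ ¬(d = -1) := by
        intro d
        simp only [zero_mul, and_true, ne_eq]
        constructor
        · intro h hd; exact h (by rw [hd]; ring)
        · intro h hc; exact h (by linear_combination hc)
      simp_rw [this, ite_not]
      exact aux_sum_ne _
    · rw [if_neg ha]
      by_cases ha1 : a = -1
      · subst ha1
        rw [if_pos rfl]
        have : ∀ d : F, ¬((-1:F) + d + 1 ≠ 0 ∧ (-1:F) * d = 0) := by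
          intro d
          rintro ⟨h1, h2⟩
          have hd : d = 0 := by
            rcases mul_eq_zero.mp h2 with h | h
            · exact absurd h (by intro hc; exact one_ne_zero (by linear_combination -hc))
            · exact h
          exact h1 (by rw [hd]; ring)
        simp only [this, if_false]
        simp
      · rw [if_neg ha1]
        have : ∀ d : F, (a + d + 1 ≠ 0 ∧ a * d = 0) ↔ d = 0 := by
          intro d
          constructor
          · rintro ⟨h1, h2⟩
            rcases mul_eq_zero.mp h2 with h | h
            · exact absurd h ha
            · exact h
          · rintro rfl
            refine ⟨?_, by ring⟩
            intro hc
            exact ha1 (by linear_combination hc)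
        simp_rw [this]
        rw [aux_sum_eq]
  simp only [inner]
  have split : ∀ a : F, (if a = 0 then (q:ℤ) - 1 else if a = -1 then 0 else 1)
      = 1 + (if a = 0 then q - 2 else 0) + (if a = -1 then -1 else 0) := by
    intro a
    have h01 : (0:F) ≠ -1 := by
      intro hc; exact one_ne_zero (by linear_combination hc)
    by_cases ha : a = 0
    · subst ha; simp [h01]; ring
    · by_cases ha1 : a = -1 <;> simp [ha, ha1]
  simp only [split]
  rw [Finset.sum_add_distrib, Finset.sum_add_distrib, Finset.sum_const, aux_sum_eq, aux_sum_eq]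
  simp; ring

end Cnt

theorem stmt_14' (F : Type*) [Field F] [Fintype F] [DecidableEq F] :
    (Nat.card {C : Matrix (Fin 2) (Fin 2) F // C.rank = 1 ∧ IsUnit (C + 1)} : ℤ) =
      ((Fintype.card F : ℤ) ^ 2 - (Fintype.card F : ℤ) - 1) * ((Fintype.card F : ℤ) + 1) := by
  classical
  set q : ℤ := (Fintype.card F : ℤ) with hq
  -- the equivalence with tuples
  let e : Matrix (Fin 2) (Fin 2) F ≃ (F × F) × (F × F) :=
    { toFun := fun C => ((C 0 0, C 1 1), (C 0 1, C 1 0))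
      invFun := fun x => !![x.1.1, x.2.1; x.2.2, x.1.2]
      left_inv := fun C => by
        ext i j
        fin_cases i <;> fin_cases j <;> simp
      right_inv := fun x => by simp }
  -- characterize the predicate by matrix entries
  have hPiff : ∀ C : Matrix (Fin 2) (Fin 2) F, (C.rank = 1 ∧ IsUnit (C + 1)) ↔
      (C 0 0 * C 1 1 = C 0 1 * C 1 0 ∧ C 0 0 + C 1 1 + 1 ≠ 0 ∧ C ≠ 0) := by
    intro C
    rw [aux_rank_one_iff]
    have hdet : C.det = C 0 0 * C 1 1 - C 0 1 * C 1 0 := Matrix.det_fin_two C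
    have hdet1 : (C + 1).det = (C 0 0 + 1) * (C 1 1 + 1) - C 0 1 * C 1 0 := by
      rw [Matrix.det_fin_two]
      simp [Matrix.add_apply, Matrix.one_apply]
    have hu : IsUnit (C + 1) ↔ (C + 1).det ≠ 0 := by
      rw [Matrix.isUnit_iff_isUnit_det, isUnit_iff_ne_zero]
    constructor
    · rintro ⟨⟨h0, hd⟩, hun⟩
      rw [hdet] at hd
      refine ⟨sub_eq_zero.mp hd, ?_, h0⟩
      intro htr
      apply hu.mp hun
      rw [hdet1]
      linear_combination hd + htr
    · rintro ⟨hprod, htr, h0⟩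
      refine ⟨⟨h0, by rw [hdet]; linear_combination hprod⟩, hu.mpr ?_⟩
      rw [hdet1]
      intro hc
      apply htr
      linear_combination hc - hprod
  -- transfer to tuples
  have hzero : ∀ C : Matrix (Fin 2) (Fin 2) F,
      C ≠ 0 ↔ e C ≠ (((0 : F), (0 : F)), ((0 : F), (0 : F))) := by
    intro C
    constructor
    · intro h hc
      apply h
      have h1 := congrArg (fun x => x.1.1) hc
      have h2 := congrArg (fun x => x.1.2) hc
      have h3 := congrArg (fun x => x.2.1) hc
      have h4 := congrArg (fun x => x.2.2) hc
      simp only [e, Equiv.coe_fn_mk] at h1 h2 h3 h4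
      ext i j
      fin_cases i <;> fin_cases j <;> simpa using (by assumption)
    · rintro h rfl
      apply h
      simp [e]
  set z : (F × F) × (F × F) := (((0 : F), (0 : F)), ((0 : F), (0 : F))) with hz
  have hcongr : Nat.card {C : Matrix (Fin 2) (Fin 2) F // C.rank = 1 ∧ IsUnit (C + 1)}
      = Nat.card {x : (F × F) × (F × F) //
          x.1.1 * x.1.2 = x.2.1 * x.2.2 ∧ x.1.1 + x.1.2 + 1 ≠ 0 ∧ x ≠ z} := by
    apply Nat.card_congr
    apply e.subtypeEquiv
    intro C
    rw [hPiff C, hzero C]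
    exact Iff.rfl
  rw [hcongr]
  -- to a Finset count
  rw [Nat.card_eq_fintype_card, Fintype.card_subtype]
  have herase : Finset.univ.filter
        (fun x : (F × F) × (F × F) =>
          x.1.1 * x.1.2 = x.2.1 * x.2.2 ∧ x.1.1 + x.1.2 + 1 ≠ 0 ∧ x ≠ z)
      = (Finset.univ.filter (fun x : (F × F) × (F × F) =>
          x.1.1 * x.1.2 = x.2.1 * x.2.2 ∧ x.1.1 + x.1.2 + 1 ≠ 0)).erase z := by
    ext x
    simp only [Finset.mem_erase, Finset.mem_filter, Finset.mem_univ, true_and]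
    tauto
  have hzmem : z ∈ Finset.univ.filter (fun x : (F × F) × (F × F) =>
      x.1.1 * x.1.2 = x.2.1 * x.2.2 ∧ x.1.1 + x.1.2 + 1 ≠ 0) := by
    simp [hz]
  rw [herase, Finset.card_erase_of_mem hzmem]
  have hpos : 1 ≤ (Finset.univ.filter (fun x : (F × F) × (F × F) =>
      x.1.1 * x.1.2 = x.2.1 * x.2.2 ∧ x.1.1 + x.1.2 + 1 ≠ 0)).card :=
    Finset.card_pos.mpr ⟨z, hzmem⟩
  rw [Nat.cast_sub hpos, Nat.cast_one]
  -- compute the big count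
  have hcount : ((Finset.univ.filter (fun x : (F × F) × (F × F) =>
      x.1.1 * x.1.2 = x.2.1 * x.2.2 ∧ x.1.1 + x.1.2 + 1 ≠ 0)).card : ℤ)
      = (q - 1) * (q^2 - q) + q * (2*q - 3) := by
    rw [Finset.card_filter]
    push_cast
    rw [Fintype.sum_prod_type]
    have key : ∀ p : F × F, (∑ r : F × F,
        if p.1 * p.2 = r.1 * r.2 ∧ p.1 + p.2 + 1 ≠ 0 then (1 : ℤ) else 0)
        = if p.1 + p.2 + 1 = 0 then 0 else if p.1 * p.2 = 0 then 2*q - 1 else q - 1 := by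
      intro p
      by_cases htr : p.1 + p.2 + 1 = 0
      · rw [if_pos htr]
        simp [htr]
      · rw [if_neg htr]
        have hiff : ∀ r : F × F,
            (p.1 * p.2 = r.1 * r.2 ∧ p.1 + p.2 + 1 ≠ 0) ↔ (r.1 * r.2 = p.1 * p.2) := by
          intro r
          constructor
          · rintro ⟨h, -⟩; exact h.symm
          · intro h; exact ⟨h.symm, htr⟩
        simp_rw [hiff]
        exact aux_fib _
    simp only [key]
    have split : ∀ p : F × F,
        (if p.1 + p.2 + 1 = 0 then (0:ℤ) else if p.1 * p.2 = 0 then 2*q - 1 else q - 1)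
        = (q - 1) * (if p.1 + p.2 + 1 = 0 then 0 else 1)
          + q * (if p.1 + p.2 + 1 ≠ 0 ∧ p.1 * p.2 = 0 then 1 else 0) := by
      intro p
      by_cases h1 : p.1 + p.2 + 1 = 0 <;> by_cases h2 : p.1 * p.2 = 0 <;>
        simp [h1, h2] <;> ring
    simp only [split]
    rw [Finset.sum_add_distrib, ← Finset.mul_sum, ← Finset.mul_sum, aux_trace, aux_B]
  rw [hcount]
  ring

/-- Over a finite field with `q` elements, the number of
`2×2` matrices `C` of rank `1` such that `-1` is not an eigenvalue of `C`
(equivalently, `C + I` is invertible) equals `(q²−q−1)(q+1)`. -/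
theorem stmt_14 (F : Type*) [Field F] [Fintype F] :
    (Nat.card {C : Matrix (Fin 2) (Fin 2) F // C.rank = 1 ∧ IsUnit (C + 1)} : ℤ) =
      ((Fintype.card F : ℤ) ^ 2 - (Fintype.card F : ℤ) - 1) * ((Fintype.card F : ℤ) + 1) := by
  classical
  exact stmt_14' F
end
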